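/- arXiv:1801.09863 — 9 statements merged into one kernel-verified Lean document; each statement's English description precedes it below -/
import Mathlib

section
/- Let m, n, q be positive integers, let R be a subset of F_m, and let G be the group presented as F_m modulo the normal closure of R ∪ W_n (i.e., G = ⟨x_1, …, x_m | R, W_n⟩). If the quotient G/γ_q G is isomorphic to F^q(m,n), then R is contained in the subgroup W̄_n · γ_q F_m of F_m. -/
open Subgroup
open scoped commutatorElement

universe u

lemma lcs_map_eq {G H : Type*} [Group G] [Group H] (f : G →* H)
    (hf : Function.Surjective f) (n : ℕ) :
    ((⊤ : Subgroup G).lowerCentralSeries n).map f = (⊤ : Subgroup H).lowerCentralSeries n := by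
  induction n with
  | zero =>
    simp only [Subgroup.lowerCentralSeries_zero]
    rw [← MonoidHom.range_eq_map]
    exact MonoidHom.range_eq_top.mpr hf
  | succ n ih =>
    show Subgroup.map f ⁅(⊤ : Subgroup G).lowerCentralSeries n, ⊤⁆ = ⁅(⊤ : Subgroup H).lowerCentralSeries n, ⊤⁆
    rw [Subgroup.map_commutator, ih, ← MonoidHom.range_eq_map,
      MonoidHom.range_eq_top.mpr hf]

lemma commutatorElement_mul_center_left {G : Type*} [Group G] (a b z : G)
    (hz : z ∈ Subgroup.center G) : ⁅a * z, b⁆ = ⁅a, b⁆ := by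
  rw [Subgroup.mem_center_iff] at hz
  simp only [commutatorElement_def, mul_inv_rev]
  rw [show a * z * b * (z⁻¹ * a⁻¹) * b⁻¹ = a * (z * b) * z⁻¹ * a⁻¹ * b⁻¹ by group,
    ← hz b]
  group

lemma commutatorElement_mul_center_right {G : Type*} [Group G] (a b w : G)
    (hw : w ∈ Subgroup.center G) : ⁅a, b * w⁆ = ⁅a, b⁆ := by
  rw [Subgroup.mem_center_iff] at hw
  simp only [commutatorElement_def, mul_inv_rev]
  rw [show a * (b * w) * a⁻¹ * (w⁻¹ * b⁻¹) = a * b * (w * a⁻¹) * w⁻¹ * b⁻¹ by group,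
    ← hw a⁻¹]
  group

lemma finite_commutatorSet_of_finite_quotient_center (G : Type*) [Group G]
    [Finite (G ⧸ Subgroup.center G)] : Finite (commutatorSet G) := by
  set Z := Subgroup.center G
  have key : commutatorSet G ⊆
      Set.range (fun p : (G ⧸ Z) × (G ⧸ Z) => ⁅p.1.out, p.2.out⁆) := by
    rintro x ⟨g, h, rfl⟩
    refine ⟨(QuotientGroup.mk g, QuotientGroup.mk h), ?_⟩
    have hg : ((QuotientGroup.mk g : G ⧸ Z)).out = g * (g⁻¹ * (QuotientGroup.mk g : G ⧸ Z).out) := by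
      group
    have hg' : g⁻¹ * ((QuotientGroup.mk g : G ⧸ Z)).out ∈ Z := by
      rw [← QuotientGroup.eq]
      exact (QuotientGroup.out_eq' _).symm
    have hh : ((QuotientGroup.mk h : G ⧸ Z)).out = h * (h⁻¹ * (QuotientGroup.mk h : G ⧸ Z).out) := by
      group
    have hh' : h⁻¹ * ((QuotientGroup.mk h : G ⧸ Z)).out ∈ Z := by
      rw [← QuotientGroup.eq]
      exact (QuotientGroup.out_eq' _).symm
    simp only []
    rw [hg, hh, commutatorElement_mul_center_left _ _ _ hg',
      commutatorElement_mul_center_right _ _ _ hh']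
  exact (Set.finite_range _).subset key |>.to_subtype

lemma finite_of_fg_nilpotent_torsion :
    ∀ (G : Type u) [Group G] [Group.IsNilpotent G],
      Group.FG G → Monoid.IsTorsion G → Finite G := by
  intro G _ _
  refine nilpotent_center_quotient_ind
    (P := fun G _ _ => Group.FG G → Monoid.IsTorsion G → Finite G) G ?_ ?_
  · intro G _ _ _ _
    exact Finite.of_subsingleton
  · intro G _ _ ih hfg htors
    have hZ : Finite (G ⧸ Subgroup.center G) :=
      ih (Group.fg_of_surjective (QuotientGroup.mk'_surjective _))
        (IsTorsion.of_surjective (QuotientGroup.mk'_surjective (Subgroup.center G)) htors)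
    have h1 : Finite (commutatorSet G) := finite_commutatorSet_of_finite_quotient_center G
    have h2 : Finite (commutator G) := inferInstance
    have habfg : Group.FG (Abelianization G) :=
      Group.fg_of_surjective (f := Abelianization.of)
        (QuotientGroup.mk'_surjective (commutator G))
    have hab : Finite (Abelianization G) :=
      CommGroup.finite_of_fg_torsion _
        (IsTorsion.of_surjective (f := Abelianization.of)
          (QuotientGroup.mk'_surjective (commutator G)) htors)
    have h3 : Finite (G ⧸ commutator G) := hab
    exact Finite.of_equiv _ (Subgroup.groupEquivQuotientProdSubgroup (s := commutator G)).symm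



/-- `W_n`, the set of `n`-th powers in a group `G`. -/
def powSet (G : Type*) [Group G] (n : ℕ) : Set G := {x | ∃ w : G, x = w ^ n}

/-- `W̄_n`, the normal subgroup of the free group `F_m` generated by the set `W_n`
of `n`-th powers. -/
def Wbar (m n : ℕ) : Subgroup (FreeGroup (Fin m)) :=
  Subgroup.normalClosure (powSet (FreeGroup (Fin m)) n)

instance (m n : ℕ) : (Wbar m n).Normal := Subgroup.normalClosure_normal

/-- `W̄_n · γ_q F_m`: since both factors are normal subgroups of `F_m`, this product
subgroup equals the join.  (Recall `lowerCentralSeries G 0 = G = γ₁ G`, so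
`γ_q G = lowerCentralSeries G (q-1)`.) -/
def WbarGamma (m n q : ℕ) : Subgroup (FreeGroup (Fin m)) :=
  Wbar m n ⊔ (⊤ : Subgroup (FreeGroup (Fin m))).lowerCentralSeries (q - 1)

instance (m n q : ℕ) : (WbarGamma m n q).Normal := Subgroup.sup_normal _ _

/-- `F^q(m,n) = F_m / (W̄_n · γ_q F_m)`. -/
def BurnsideQuot (m n q : ℕ) : Type := FreeGroup (Fin m) ⧸ WbarGamma m n q

noncomputable instance (m n q : ℕ) : Group (BurnsideQuot m n q) :=
  QuotientGroup.Quotient.group _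

/-- Let `m, n, q` be positive integers, `R ⊆ F_m`, and let
`G = ⟨x_1, …, x_m | R, W_n⟩` be the quotient of the free group `F_m` by the normal
closure of `R ∪ W_n`.  If `G/γ_q G ≅ F^q(m,n)`, then `R ⊆ W̄_n · γ_q F_m`. -/
theorem burnside_presentation_relators_mem
    (m n q : ℕ) (hm : 0 < m) (hn : 0 < n) (hq : 0 < q)
    (R : Set (FreeGroup (Fin m)))
    (h : Nonempty (
      ((FreeGroup (Fin m) ⧸
          Subgroup.normalClosure (R ∪ powSet (FreeGroup (Fin m)) n)) ⧸
        Subgroup.lowerCentralSeries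
          (⊤ : Subgroup (FreeGroup (Fin m) ⧸
            Subgroup.normalClosure (R ∪ powSet (FreeGroup (Fin m)) n))) (q - 1))
      ≃* BurnsideQuot m n q)) :
    R ⊆ ↑(WbarGamma m n q) := by
  obtain ⟨e0⟩ := h
  set N : Subgroup (FreeGroup (Fin m)) :=
    Subgroup.normalClosure (R ∪ powSet (FreeGroup (Fin m)) n) with hN
  set K : Subgroup (FreeGroup (Fin m)) := WbarGamma m n q with hK
  set M : Subgroup (FreeGroup (Fin m)) :=
    N ⊔ (⊤ : Subgroup (FreeGroup (Fin m))).lowerCentralSeries (q - 1) with hM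
  haveI : N.Normal := Subgroup.normalClosure_normal
  haveI : M.Normal := Subgroup.sup_normal _ _
  have hNM : N ≤ M := le_sup_left
  have hKM : K ≤ M := by
    rw [hK, hM, WbarGamma]
    exact sup_le_sup_right
      (Subgroup.normalClosure_mono Set.subset_union_right) _
  have hγK : (⊤ : Subgroup (FreeGroup (Fin m))).lowerCentralSeries (q - 1) ≤ K := by
    rw [hK, WbarGamma]; exact le_sup_right
  have hWK : Wbar m n ≤ K := by
    rw [hK, WbarGamma]; exact le_sup_left
  -- the lower central series of F/N corresponds to M
  have hbot : N.map (QuotientGroup.mk' N) = ⊥ := by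
    rw [Subgroup.map_eq_bot_iff, QuotientGroup.ker_mk']
  have hlcs : M.map (QuotientGroup.mk' N)
      = (⊤ : Subgroup (FreeGroup (Fin m) ⧸ N)).lowerCentralSeries (q - 1) := by
    rw [hM, Subgroup.map_sup, hbot, bot_sup_eq,
      lcs_map_eq (QuotientGroup.mk' N) (QuotientGroup.mk'_surjective N)]
  haveI : (M.map (QuotientGroup.mk' N)).Normal :=
    Subgroup.Normal.map ‹M.Normal› _ (QuotientGroup.mk'_surjective N)
  -- the isomorphism F/M ≃ BurnsideQuot
  have e1 := QuotientGroup.quotientQuotientEquivQuotient N M hNM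
  have e2 := QuotientGroup.quotientMulEquivOfEq hlcs
  have e : (FreeGroup (Fin m) ⧸ M) ≃* BurnsideQuot m n q :=
    e1.symm.trans (e2.trans e0)
  -- the natural projection BurnsideQuot → F/M
  let π : BurnsideQuot m n q →* FreeGroup (Fin m) ⧸ M :=
    QuotientGroup.map K M (MonoidHom.id _) (by simpa using hKM)
  have hπmk : ∀ w : FreeGroup (Fin m),
      π ((QuotientGroup.mk w : FreeGroup (Fin m) ⧸ K)) = QuotientGroup.mk w := by
    intro w; rfl
  have hπs : Function.Surjective π := by
    intro x
    obtain ⟨w, rfl⟩ := QuotientGroup.mk_surjective x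
    exact ⟨QuotientGroup.mk w, hπmk w⟩
  -- BurnsideQuot is finite
  haveI : Group.FG (FreeGroup (Fin m)) :=
    Group.fg_iff.mpr ⟨Set.range FreeGroup.of, FreeGroup.closure_range_of _, Set.finite_range _⟩
  have hfgQ : Group.FG (BurnsideQuot m n q) :=
    Group.fg_of_surjective (f := QuotientGroup.mk' K) (QuotientGroup.mk'_surjective K)
  haveI hnilQ : Group.IsNilpotent (BurnsideQuot m n q) := by
    rw [_root_.nilpotent_iff_lowerCentralSeries]
    refine ⟨q - 1, ?_⟩
    show (⊤ : Subgroup (FreeGroup (Fin m) ⧸ K)).lowerCentralSeries (q - 1) = ⊥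
    rw [← lcs_map_eq (QuotientGroup.mk' K) (QuotientGroup.mk'_surjective K),
      Subgroup.map_eq_bot_iff, QuotientGroup.ker_mk']
    exact hγK
  have htorsQ : Monoid.IsTorsion (BurnsideQuot m n q) := by
    intro g
    obtain ⟨w, rfl⟩ := QuotientGroup.mk_surjective g
    refine isOfFinOrder_iff_pow_eq_one.mpr ⟨n, hn, ?_⟩
    have : w ^ n ∈ K := hWK (Subgroup.subset_normalClosure ⟨w, rfl⟩)
    calc (QuotientGroup.mk w : BurnsideQuot m n q) ^ n
        = ((QuotientGroup.mk (w ^ n) : FreeGroup (Fin m) ⧸ K) : BurnsideQuot m n q) := by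
          rw [QuotientGroup.mk_pow]
      _ = 1 := (QuotientGroup.eq_one_iff _).mpr this
  haveI hfinQ : Finite (BurnsideQuot m n q) :=
    finite_of_fg_nilpotent_torsion _ hfgQ htorsQ
  haveI hfinM : Finite (FreeGroup (Fin m) ⧸ M) := Finite.of_equiv _ e.symm.toEquiv
  -- the composed surjective endomorphism is injective
  have hψinj : Function.Injective (π.comp e.toMonoidHom) :=
    Finite.injective_iff_surjective.mpr (hπs.comp e.surjective)
  have hπinj : Function.Injective π := by
    have hcomp : (⇑π) = (⇑(π.comp e.toMonoidHom)) ∘ ⇑e.symm := by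
      funext x
      simp
    rw [hcomp]
    exact hψinj.comp e.symm.injective
  -- conclude
  intro r hr
  have hrM : r ∈ M := hNM (Subgroup.subset_normalClosure (Or.inl hr))
  have h1 : π ((QuotientGroup.mk r : FreeGroup (Fin m) ⧸ K)) = 1 := by
    rw [hπmk]
    exact (QuotientGroup.eq_one_iff _).mpr hrM
  have h2 : (QuotientGroup.mk r : FreeGroup (Fin m) ⧸ K) = 1 := by
    apply hπinj
    rw [h1]
    exact (map_one π).symm
  exact (QuotientGroup.eq_one_iff _).mp h2
end

section
/- For all positive integers m, n, q, the group F^q(m,n) = F_m/(W̄_n · γ_q F_m) is finite. -/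
/-- Lower central series maps onto lower central series under a surjective hom. -/
lemma lcs_map_surj {G H : Type*} [Group G] [Group H] (f : G →* H)
    (hf : Function.Surjective f) :
    ∀ k, Subgroup.map f ((⊤ : Subgroup G).lowerCentralSeries k) = (⊤ : Subgroup H).lowerCentralSeries k
  | 0 => by simpa using Subgroup.map_top_of_surjective f hf
  | k + 1 => by
    show Subgroup.map f ⁅(⊤ : Subgroup G).lowerCentralSeries k, ⊤⁆ = ⁅(⊤ : Subgroup H).lowerCentralSeries k, ⊤⁆
    rw [Subgroup.map_commutator, lcs_map_surj f hf k, Subgroup.map_top_of_surjective f hf]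

open commutatorElement in
/-- A finitely generated group of finite exponent which is nilpotent is finite. -/
lemma finite_of_fg_exp_nilpotent (n : ℕ) (hn : 0 < n) :
    ∀ k (G : Type) [Group G], Group.FG G → (∀ g : G, g ^ n = 1) →
      (⊤ : Subgroup G).lowerCentralSeries k = ⊥ → Finite G := by
  intro k
  induction k with
  | zero =>
    intro G _ _ _ hbot
    have : (⊤ : Subgroup G) = ⊥ := hbot
    have : Subsingleton G := by
      constructor
      intro a b
      have ha : a ∈ (⊥ : Subgroup G) := this ▸ Subgroup.mem_top a
      have hb : b ∈ (⊥ : Subgroup G) := this ▸ Subgroup.mem_top b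
      rw [Subgroup.mem_bot] at ha hb
      rw [ha, hb]
    exact Finite.of_subsingleton
  | succ k ih =>
    intro G _ hfg htor hbot
    have hcen : (⊤ : Subgroup G).lowerCentralSeries k ≤ Subgroup.center G := by
      intro p hp
      rw [Subgroup.mem_center_iff]
      intro g
      have : ⁅p, g⁆ ∈ ⁅(⊤ : Subgroup G).lowerCentralSeries k, (⊤ : Subgroup G)⁆ :=
        Subgroup.commutator_mem_commutator hp (Subgroup.mem_top g)
      have : ⁅p, g⁆ ∈ (⊤ : Subgroup G).lowerCentralSeries (k + 1) := this
      rw [hbot, Subgroup.mem_bot, commutatorElement_eq_one_iff_mul_comm] at this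
      rw [this]
    set Z := Subgroup.center G
    -- the quotient by the center is finite by induction
    have hsurj : Function.Surjective (QuotientGroup.mk' Z) := QuotientGroup.mk'_surjective Z
    have hfgQ : Group.FG (G ⧸ Z) := haveI := hfg; Group.fg_of_surjective hsurj
    have htorQ : ∀ g : G ⧸ Z, g ^ n = 1 := by
      intro g
      obtain ⟨x, rfl⟩ := hsurj g
      rw [← map_pow, htor x, map_one]
    have hbotQ : (⊤ : Subgroup (G ⧸ Z)).lowerCentralSeries k = ⊥ := by
      rw [← lcs_map_surj (QuotientGroup.mk' Z) hsurj k, Subgroup.map_eq_bot_iff,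
        QuotientGroup.ker_mk']
      exact hcen
    have hQfin : Finite (G ⧸ Z) := ih (G ⧸ Z) hfgQ htorQ hbotQ
    -- the center is finite: it is f.g. (Schreier) abelian torsion
    have : Subgroup.FiniteIndex Z := Z.finiteIndex_of_finite_quotient
    have hZfg : Group.FG Z := @Subgroup.fg_of_index_ne_zero G _ Z hfg this
    have hZtor : Monoid.IsTorsion Z := by
      intro z
      refine isOfFinOrder_iff_pow_eq_one.mpr ⟨n, hn, ?_⟩
      ext
      push_cast
      exact htor z
    have hZfin : Finite Z := by
      open IsMulCommutative in exact @CommGroup.finite_of_fg_isMulTorsion Z _ hZfg hZtor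
    exact Finite.of_equiv _ (Subgroup.groupEquivQuotientProdSubgroup (s := Z)).symm

/-- For all positive integers `m, n, q`, the group
`F^q(m,n) = F_m/(W̄_n · γ_q F_m)` is finite. -/
theorem burnsideQuot_finite (m n q : ℕ) (hm : 0 < m) (hn : 0 < n) (hq : 0 < q) :
    Finite (BurnsideQuot m n q) := by
  set N := WbarGamma m n q with hN
  have hsurj : Function.Surjective (QuotientGroup.mk' N) := QuotientGroup.mk'_surjective N
  have hFfg : Group.FG (FreeGroup (Fin m)) := by
    refine ⟨⟨Finset.univ.image FreeGroup.of, ?_⟩⟩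
    rw [Finset.coe_image, Finset.coe_univ, Set.image_univ]
    exact FreeGroup.closure_range_of (Fin m)
  have hfg : Group.FG (FreeGroup (Fin m) ⧸ N) :=
    haveI := hFfg; Group.fg_of_surjective hsurj
  have htor : ∀ g : FreeGroup (Fin m) ⧸ N, g ^ n = 1 := by
    intro g
    obtain ⟨w, rfl⟩ := hsurj g
    rw [← map_pow]
    rw [show ((QuotientGroup.mk' N) (w ^ n) = 1) ↔ w ^ n ∈ N from QuotientGroup.eq_one_iff _]
    exact Subgroup.mem_sup_left (Subgroup.subset_normalClosure ⟨w, rfl⟩)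
  have hbot : (⊤ : Subgroup (FreeGroup (Fin m) ⧸ N)).lowerCentralSeries (q - 1) = ⊥ := by
    rw [← lcs_map_surj (QuotientGroup.mk' N) hsurj (q - 1), Subgroup.map_eq_bot_iff,
      QuotientGroup.ker_mk']
    exact le_sup_right
  exact finite_of_fg_exp_nilpotent n hn (q - 1) (FreeGroup (Fin m) ⧸ N) hfg htor hbot
end

section
/- Let p be a prime and m a positive integer, and work in the truncated algebra A_{p+1} over ℤ/pℤ. For every u ∈ F_m, write the degree-1 component of E^p(u) as ℓ = Σ_{i=1}^m a_i X_i with a_i ∈ ℤ/pℤ. Then E^p(u^p) = 1 + ℓ^p in A_{p+1}; that is, E^p(u^p) = 1 + Σ_{(i_1, …, i_p)∈{1,…,m}^p} a_{i_1}⋯a_{i_p} X_{i_1}⋯X_{i_p}. -/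
/-- The monomial `X_{w₁} ⋯ X_{w_l}` in the free associative `ZMod p`-algebra `T` on
noncommuting indeterminates `X_1, …, X_m`. -/
def magnusMonomial (p m : ℕ) (w : List (Fin m)) : FreeAlgebra (ZMod p) (Fin m) :=
  (w.map (FreeAlgebra.ι (ZMod p))).prod

/-- The relation generating (as a ring congruence) the two-sided ideal `I^k`, where
`I ⊆ T` is the two-sided ideal generated by `X_1, …, X_m`: every monomial of degree `k`
is set to `0`. -/
def truncRel (p m k : ℕ) :
    FreeAlgebra (ZMod p) (Fin m) → FreeAlgebra (ZMod p) (Fin m) → Prop :=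
  fun a b => ∃ w : List (Fin m), w.length = k ∧ a = magnusMonomial p m w ∧ b = 0

/-- The truncated algebra `A_k = T/I^k`. -/
abbrev TruncAlgebra (p m k : ℕ) := RingQuot (truncRel p m k)

/-- The quotient map `T → A_k`. -/
def truncMk (p m k : ℕ) :
    FreeAlgebra (ZMod p) (Fin m) →+* TruncAlgebra p m k :=
  RingQuot.mkRingHom _

lemma isUnit_one_add_X (p m k : ℕ) (i : Fin m) :
    IsUnit (1 + truncMk p m k (FreeAlgebra.ι (ZMod p) i)) := by
  refine IsNilpotent.isUnit_one_add ⟨k, ?_⟩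
  rw [← map_pow]
  have h1 : (FreeAlgebra.ι (ZMod p) i) ^ k = magnusMonomial p m (List.replicate k i) := by
    simp [magnusMonomial, List.map_replicate, List.prod_replicate]
  have h2 : truncMk p m k (magnusMonomial p m (List.replicate k i)) = truncMk p m k 0 :=
    RingQuot.mkRingHom_rel ⟨List.replicate k i, List.length_replicate, rfl, rfl⟩
  rw [h1, h2, map_zero]

/-- The Magnus `ZMod p`-expansion truncated at degree `k`: the unique group homomorphism
`E^p : F_m → A_kˣ` with `E^p(x_i) = 1 + X_i`. -/
noncomputable def magnus (p m k : ℕ) :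
    FreeGroup (Fin m) →* (TruncAlgebra p m k)ˣ :=
  FreeGroup.lift fun i => (isUnit_one_add_X p m k i).unit

/-- The coefficient of the monomial `X_{w₁} ⋯ X_{w_l}` in an element of the free
algebra `T`, via the canonical basis of `T` given by words in `X_1, …, X_m`. -/
noncomputable def magnusCoeff (p m : ℕ) (w : List (Fin m))
    (t : FreeAlgebra (ZMod p) (Fin m)) : ZMod p :=
  (FreeAlgebra.equivMonoidAlgebraFreeMonoid (R := ZMod p) (X := Fin m) t).coeff
    (FreeMonoid.ofList w)

/-! ### Auxiliary lemmas -/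

section Aux

variable (p m : ℕ)

lemma magnusMonomial_nil : magnusMonomial p m [] = 1 := rfl

lemma magnusMonomial_cons (i : Fin m) (w : List (Fin m)) :
    magnusMonomial p m (i :: w) = FreeAlgebra.ι (ZMod p) i * magnusMonomial p m w := by
  simp [magnusMonomial]

lemma magnusMonomial_append (w v : List (Fin m)) :
    magnusMonomial p m (w ++ v) = magnusMonomial p m w * magnusMonomial p m v := by
  simp [magnusMonomial]

lemma equiv_magnusMonomial (w : List (Fin m)) :
    FreeAlgebra.equivMonoidAlgebraFreeMonoid (R := ZMod p) (X := Fin m)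
      (magnusMonomial p m w)
      = MonoidAlgebra.single (FreeMonoid.ofList w) 1 := by
  induction w with
  | nil =>
    rw [magnusMonomial_nil, map_one]
    rfl
  | cons i w ih =>
    rw [magnusMonomial_cons, map_mul, ih]
    have hi : FreeAlgebra.equivMonoidAlgebraFreeMonoid (R := ZMod p) (X := Fin m)
        (FreeAlgebra.ι (ZMod p) i) = MonoidAlgebra.single (FreeMonoid.of i) 1 := by
      simp [FreeAlgebra.equivMonoidAlgebraFreeMonoid]
    rw [hi, MonoidAlgebra.single_mul_single, one_mul]
    congr 1

lemma magnusCoeff_magnusMonomial (w v : List (Fin m)) :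
    magnusCoeff p m w (magnusMonomial p m v) = if v = w then 1 else 0 := by
  classical
  rw [magnusCoeff, equiv_magnusMonomial]
  by_cases hvw : v = w
  · subst hvw; simp
  · have hne : FreeMonoid.ofList v ≠ FreeMonoid.ofList w := fun h =>
      hvw (by simpa using congrArg FreeMonoid.toList h)
    rw [if_neg hvw, MonoidAlgebra.coeff_single_apply, if_neg hne]

lemma magnusCoeff_add (w : List (Fin m)) (x y : FreeAlgebra (ZMod p) (Fin m)) :
    magnusCoeff p m w (x + y) = magnusCoeff p m w x + magnusCoeff p m w y := by
  rw [magnusCoeff, magnusCoeff, magnusCoeff, map_add]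
  rw [MonoidAlgebra.coeff_add]
  exact Finsupp.add_apply _ _ _

lemma magnusCoeff_smul (w : List (Fin m)) (c : ZMod p) (x : FreeAlgebra (ZMod p) (Fin m)) :
    magnusCoeff p m w (c • x) = c * magnusCoeff p m w x := by
  rw [magnusCoeff, magnusCoeff, map_smul]
  exact MonoidAlgebra.coeff_smul_apply _ _ _

lemma magnusCoeff_zero (w : List (Fin m)) : magnusCoeff p m w 0 = 0 := by
  simp [magnusCoeff]

lemma magnusCoeff_sum (w : List (Fin m)) {ι : Type*} (s : Finset ι)
    (f : ι → FreeAlgebra (ZMod p) (Fin m)) :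
    magnusCoeff p m w (∑ i ∈ s, f i) = ∑ i ∈ s, magnusCoeff p m w (f i) := by
  classical
  induction s using Finset.induction with
  | empty => simp [magnusCoeff_zero]
  | insert _ _ h ih => rw [Finset.sum_insert h, Finset.sum_insert h, magnusCoeff_add, ih]

lemma magnusCoeff_one (w : List (Fin m)) :
    magnusCoeff p m w 1 = if w = [] then 1 else 0 := by
  have := magnusCoeff_magnusMonomial p m w []
  rw [magnusMonomial_nil] at this
  rw [this]
  by_cases h : w = [] <;> simp [h, eq_comm]

/-- The `ZMod p`-span of monomials of degree at least `d`. -/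
def degSpan (d : ℕ) : Submodule (ZMod p) (FreeAlgebra (ZMod p) (Fin m)) :=
  Submodule.span (ZMod p)
    {x | ∃ w : List (Fin m), d ≤ w.length ∧ x = magnusMonomial p m w}

lemma degSpan_mono {d e : ℕ} (h : d ≤ e) : degSpan p m e ≤ degSpan p m d := by
  apply Submodule.span_mono
  rintro x ⟨w, hw, rfl⟩
  exact ⟨w, le_trans h hw, rfl⟩

lemma magnusMonomial_mem_degSpan {d : ℕ} {w : List (Fin m)} (h : d ≤ w.length) :
    magnusMonomial p m w ∈ degSpan p m d :=
  Submodule.subset_span ⟨w, h, rfl⟩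

lemma degSpan_mul {d e : ℕ} {x y : FreeAlgebra (ZMod p) (Fin m)}
    (hx : x ∈ degSpan p m d) (hy : y ∈ degSpan p m e) :
    x * y ∈ degSpan p m (d + e) := by
  induction hx using Submodule.span_induction with
  | mem x hx =>
    obtain ⟨w, hw, rfl⟩ := hx
    induction hy using Submodule.span_induction with
    | mem y hy =>
      obtain ⟨v, hv, rfl⟩ := hy
      rw [← magnusMonomial_append]
      exact magnusMonomial_mem_degSpan p m (by simp [List.length_append]; omega)
    | zero => simp
    | add y z _ _ hy hz => rw [mul_add]; exact (degSpan p m _).add_mem hy hz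
    | smul c y _ hy => rw [mul_smul_comm]; exact (degSpan p m _).smul_mem c hy
  | zero => simp
  | add x z _ _ hx hz => rw [add_mul]; exact (degSpan p m _).add_mem hx hz
  | smul c x _ hx => rw [smul_mul_assoc]; exact (degSpan p m _).smul_mem c hx

lemma degSpan_pow {x : FreeAlgebra (ZMod p) (Fin m)} (hx : x ∈ degSpan p m 1) (k : ℕ) :
    x ^ k ∈ degSpan p m k := by
  induction k with
  | zero =>
    rw [pow_zero, ← magnusMonomial_nil p m]
    exact magnusMonomial_mem_degSpan p m (by simp)
  | succ k ih =>
    rw [pow_succ]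
    exact degSpan_mul p m ih hx

lemma magnusCoeff_eq_zero_of_degSpan {d : ℕ} {w : List (Fin m)} (hw : w.length < d)
    {x : FreeAlgebra (ZMod p) (Fin m)} (hx : x ∈ degSpan p m d) :
    magnusCoeff p m w x = 0 := by
  induction hx using Submodule.span_induction with
  | mem x hx =>
    obtain ⟨v, hv, rfl⟩ := hx
    rw [magnusCoeff_magnusMonomial]
    have : v ≠ w := by rintro rfl; omega
    simp [this]
  | zero => exact magnusCoeff_zero p m w
  | add x y _ _ hx hy => rw [magnusCoeff_add, hx, hy, add_zero]
  | smul c x _ hx => rw [magnusCoeff_smul, hx, mul_zero]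

lemma mem_degSpan_zero (x : FreeAlgebra (ZMod p) (Fin m)) : x ∈ degSpan p m 0 := by
  induction x using FreeAlgebra.induction with
  | grade0 r =>
    have : (algebraMap (ZMod p) (FreeAlgebra (ZMod p) (Fin m))) r = r • magnusMonomial p m [] := by
      rw [magnusMonomial_nil, Algebra.smul_def, mul_one]
    rw [this]
    exact (degSpan p m 0).smul_mem r (magnusMonomial_mem_degSpan p m (by simp))
  | grade1 i =>
    have : FreeAlgebra.ι (ZMod p) i = magnusMonomial p m [i] := by
      simp [magnusMonomial]
    rw [this]
    exact magnusMonomial_mem_degSpan p m (by simp)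
  | mul x y hx hy => exact degSpan_mono p m (by omega) (degSpan_mul p m hx hy)
  | add x y hx hy => exact (degSpan p m 0).add_mem hx hy

lemma degSpan_zero_eq_top : degSpan p m 0 = ⊤ :=
  eq_top_iff.2 fun x _ => mem_degSpan_zero p m x

lemma sub_coeff_zero_mem_degSpan_one (t : FreeAlgebra (ZMod p) (Fin m)) :
    t - magnusCoeff p m [] t • 1 ∈ degSpan p m 1 := by
  have ht : t ∈ degSpan p m 0 := by rw [degSpan_zero_eq_top]; trivial
  induction ht using Submodule.span_induction with
  | mem x hx =>
    obtain ⟨w, _, rfl⟩ := hx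
    rcases w with _ | ⟨i, w⟩
    · rw [magnusMonomial_nil, magnusCoeff_one]
      simp
    · rw [magnusCoeff_magnusMonomial]
      simp only [reduceIte, List.cons_ne_nil, if_neg (List.cons_ne_nil i w)]
      rw [zero_smul, sub_zero]
      exact magnusMonomial_mem_degSpan p m (by simp)
  | zero => simp [magnusCoeff_zero]
  | add x y _ _ hx hy =>
    rw [magnusCoeff_add, add_smul]
    have : x + y - (magnusCoeff p m [] x • 1 + magnusCoeff p m [] y • 1)
        = (x - magnusCoeff p m [] x • 1) + (y - magnusCoeff p m [] y • 1) := by abel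
    rw [this]
    exact (degSpan p m 1).add_mem hx hy
  | smul c x _ hx =>
    rw [magnusCoeff_smul, mul_smul]
    rw [← smul_sub]
    exact (degSpan p m 1).smul_mem c hx

/-- Degree ≤ 1 truncation: `t - c₀•1 - Σᵢ cᵢ•Xᵢ` lies in the span of degree ≥ 2 monomials. -/
lemma sub_deg_le_one_mem_degSpan_two (t : FreeAlgebra (ZMod p) (Fin m)) :
    t - magnusCoeff p m [] t • 1
      - (∑ i : Fin m, magnusCoeff p m [i] t • FreeAlgebra.ι (ZMod p) i)
      ∈ degSpan p m 2 := by
  have ht : t ∈ degSpan p m 0 := by rw [degSpan_zero_eq_top]; trivial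
  induction ht using Submodule.span_induction with
  | mem x hx =>
    obtain ⟨w, _, rfl⟩ := hx
    rcases w with _ | ⟨i, _ | ⟨j, w⟩⟩
    · rw [magnusMonomial_nil, magnusCoeff_one]
      simp only [reduceIte]
      have : ∀ i : Fin m, magnusCoeff p m [i] (1 : FreeAlgebra (ZMod p) (Fin m)) = 0 := by
        intro i; rw [magnusCoeff_one]; simp
      simp [this]
    · -- w = [i]
      have h0 : magnusCoeff p m [] (magnusMonomial p m [i]) = 0 := by
        rw [magnusCoeff_magnusMonomial]; simp
      have h1 : ∀ j : Fin m, magnusCoeff p m [j] (magnusMonomial p m [i])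
          = if i = j then 1 else 0 := by
        intro j; rw [magnusCoeff_magnusMonomial]; simp
      rw [h0, zero_smul, sub_zero]
      have : (∑ j : Fin m, magnusCoeff p m [j] (magnusMonomial p m [i]) • FreeAlgebra.ι (ZMod p) j)
          = FreeAlgebra.ι (ZMod p) i := by
        simp only [h1]
        rw [Finset.sum_eq_single i]
        · simp
        · intro b _ hb; simp [Ne.symm hb]
        · intro h; exact absurd (Finset.mem_univ i) h
      rw [this]
      have : magnusMonomial p m [i] = FreeAlgebra.ι (ZMod p) i := by simp [magnusMonomial]
      rw [this, sub_self]
      exact (degSpan p m 2).zero_mem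
    · -- length ≥ 2
      have h0 : magnusCoeff p m [] (magnusMonomial p m (i :: j :: w)) = 0 := by
        rw [magnusCoeff_magnusMonomial]; simp
      have h1 : ∀ l : Fin m, magnusCoeff p m [l] (magnusMonomial p m (i :: j :: w)) = 0 := by
        intro l; rw [magnusCoeff_magnusMonomial]; simp
      simp only [h0, h1, zero_smul, sub_zero, Finset.sum_const_zero]
      exact magnusMonomial_mem_degSpan p m (by simp)
  | zero => simp [magnusCoeff_zero]
  | add x y _ _ hx hy =>
    have e1 : x + y - magnusCoeff p m [] (x + y) • 1
        - (∑ i : Fin m, magnusCoeff p m [i] (x + y) • FreeAlgebra.ι (ZMod p) i)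
        = (x - magnusCoeff p m [] x • 1
            - (∑ i : Fin m, magnusCoeff p m [i] x • FreeAlgebra.ι (ZMod p) i))
          + (y - magnusCoeff p m [] y • 1
            - (∑ i : Fin m, magnusCoeff p m [i] y • FreeAlgebra.ι (ZMod p) i)) := by
      simp only [magnusCoeff_add, add_smul, Finset.sum_add_distrib]
      abel
    rw [e1]
    exact (degSpan p m 2).add_mem hx hy
  | smul c x _ hx =>
    have e1 : c • x - magnusCoeff p m [] (c • x) • 1
        - (∑ i : Fin m, magnusCoeff p m [i] (c • x) • FreeAlgebra.ι (ZMod p) i)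
        = c • (x - magnusCoeff p m [] x • 1
            - (∑ i : Fin m, magnusCoeff p m [i] x • FreeAlgebra.ι (ZMod p) i)) := by
      simp only [magnusCoeff_smul, mul_smul, smul_sub, Finset.smul_sum]
    rw [e1]
    exact (degSpan p m 2).smul_mem c hx

variable (k : ℕ)

lemma truncMk_smul (c : ZMod p) (x : FreeAlgebra (ZMod p) (Fin m)) :
    truncMk p m k (c • x) = c • truncMk p m k x := by
  rw [Algebra.smul_def, map_mul, Algebra.smul_def]
  congr 1
  have : truncMk p m k = (RingQuot.mkAlgHom (ZMod p) (truncRel p m k) : _ →+* _) := by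
    rw [RingQuot.mkAlgHom_coe]; rfl
  rw [this]
  exact (RingQuot.mkAlgHom (ZMod p) (truncRel p m k)).commutes c

lemma truncMk_eq_zero_of_degSpan {x : FreeAlgebra (ZMod p) (Fin m)}
    (hx : x ∈ degSpan p m k) : truncMk p m k x = 0 := by
  induction hx using Submodule.span_induction with
  | mem x hx =>
    obtain ⟨w, hw, rfl⟩ := hx
    have hsplit : w = w.take k ++ w.drop k := (List.take_append_drop k w).symm
    rw [hsplit, magnusMonomial_append, map_mul]
    have h2 : truncMk p m k (magnusMonomial p m (w.take k)) = truncMk p m k 0 :=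
      RingQuot.mkRingHom_rel ⟨w.take k, by simp [List.length_take]; omega, rfl, rfl⟩
    rw [h2, map_zero, zero_mul]
  | zero => exact map_zero _
  | add x y _ _ hx hy => rw [map_add, hx, hy, add_zero]
  | smul c x _ hx => rw [truncMk_smul, hx, smul_zero]

/-- Key inductive lift statement: every `E^p(u)` has a representative with constant
coefficient `1`. -/
lemma magnus_has_lift (u : FreeGroup (Fin m)) :
    ∃ t : FreeAlgebra (ZMod p) (Fin m),
      truncMk p m (k + 1) t = ↑(magnus p m (k + 1) u) ∧ magnusCoeff p m [] t = 1 := by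
  induction u using FreeGroup.induction_on with
  | C1 =>
    refine ⟨1, ?_, ?_⟩
    · rw [map_one, map_one, Units.val_one]
    · rw [magnusCoeff_one]; simp
  | of i =>
    refine ⟨1 + FreeAlgebra.ι (ZMod p) i, ?_, ?_⟩
    · have : (↑((magnus p m (k + 1)) (FreeGroup.of i)) : TruncAlgebra p m (k + 1))
          = 1 + truncMk p m (k + 1) (FreeAlgebra.ι (ZMod p) i) := by
        have h1 : magnus p m (k + 1) (FreeGroup.of i)
            = (isUnit_one_add_X p m (k + 1) i).unit := FreeGroup.lift_apply_of
        rw [h1, IsUnit.unit_spec]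
      rw [this, map_add, map_one]
    · rw [magnusCoeff_add, magnusCoeff_one]
      have : magnusCoeff p m [] (FreeAlgebra.ι (ZMod p) i) = 0 := by
        have h := magnusCoeff_magnusMonomial p m [] [i]
        simp [magnusMonomial] at h
        exact h
      rw [this]; simp
  | inv_of i ih =>
    obtain ⟨t, ht, hc⟩ := ih
    -- inverse via truncated geometric series
    set n := t - magnusCoeff p m [] t • 1 with hn
    have hn1 : n ∈ degSpan p m 1 := sub_coeff_zero_mem_degSpan_one p m t
    have htn : t = 1 + n := by rw [hn, hc]; simp
    set s := ∑ j ∈ Finset.range (k + 1), (-n) ^ j with hs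
    have hgeom : t * s = 1 - (-n) ^ (k + 1) := by
      have := mul_geom_sum (-n) (k + 1)
      have h2 : -(((-n) - 1) * s) = t * s := by
        rw [htn]; noncomm_ring
      rw [← h2, this]; noncomm_ring
    have hgeom' : s * t = 1 - (-n) ^ (k + 1) := by
      have := geom_sum_mul (-n) (k + 1)
      have h2 : -(s * ((-n) - 1)) = s * t := by
        rw [htn]; noncomm_ring
      rw [← h2, this]; noncomm_ring
    have hzero : truncMk p m (k + 1) ((-n) ^ (k + 1)) = 0 :=
      truncMk_eq_zero_of_degSpan p m (k + 1)
        (degSpan_pow p m ((degSpan p m 1).neg_mem hn1) (k + 1))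
    have hts : truncMk p m (k + 1) t * truncMk p m (k + 1) s = 1 := by
      rw [← map_mul, hgeom, map_sub, map_one, hzero, sub_zero]
    have hst : truncMk p m (k + 1) s * truncMk p m (k + 1) t = 1 := by
      rw [← map_mul, hgeom', map_sub, map_one, hzero, sub_zero]
    refine ⟨s, ?_, ?_⟩
    · rw [map_inv]
      rw [ht] at hts
      set U := magnus p m (k + 1) (FreeGroup.of i : FreeGroup (Fin m)) with hU
      calc truncMk p m (k + 1) s
          = ↑U⁻¹ * (↑U * truncMk p m (k + 1) s) := by
            rw [← mul_assoc, Units.inv_mul, one_mul]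
        _ = ↑U⁻¹ := by rw [hts, mul_one]
    · rw [hs, magnusCoeff_sum]
      have hterm : ∀ j ∈ Finset.range (k + 1),
          magnusCoeff p m [] ((-n) ^ j) = if j = 0 then 1 else 0 := by
        intro j _
        rcases j with _ | j
        · simp [magnusCoeff_one]
        · rw [if_neg (Nat.succ_ne_zero j)]
          exact magnusCoeff_eq_zero_of_degSpan p m (d := j + 1) (by simp)
            (degSpan_pow p m ((degSpan p m 1).neg_mem hn1) (j + 1))
      rw [Finset.sum_congr rfl hterm]
      simp
  | mul u v ihu ihv =>
    obtain ⟨t₁, ht₁, hc₁⟩ := ihu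
    obtain ⟨t₂, ht₂, hc₂⟩ := ihv
    refine ⟨t₁ * t₂, ?_, ?_⟩
    · rw [map_mul, map_mul, Units.val_mul, ht₁, ht₂]
    · set n₁ := t₁ - magnusCoeff p m [] t₁ • 1 with hn₁
      set n₂ := t₂ - magnusCoeff p m [] t₂ • 1 with hn₂
      have hm₁ : n₁ ∈ degSpan p m 1 := sub_coeff_zero_mem_degSpan_one p m t₁
      have hm₂ : n₂ ∈ degSpan p m 1 := sub_coeff_zero_mem_degSpan_one p m t₂
      have ht1 : t₁ = 1 + n₁ := by rw [hn₁, hc₁]; simp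
      have ht2 : t₂ = 1 + n₂ := by rw [hn₂, hc₂]; simp
      have : t₁ * t₂ = 1 + (n₁ + n₂ + n₁ * n₂) := by rw [ht1, ht2]; noncomm_ring
      rw [this, magnusCoeff_add, magnusCoeff_one]
      have hz : magnusCoeff p m [] (n₁ + n₂ + n₁ * n₂) = 0 := by
        refine magnusCoeff_eq_zero_of_degSpan p m (d := 1) (by simp) ?_
        refine (degSpan p m 1).add_mem ((degSpan p m 1).add_mem hm₁ hm₂) ?_
        exact degSpan_mono p m (by omega) (degSpan_mul p m hm₁ hm₂)
      rw [hz]; simp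

/-- Expansion of the `n`-th power of a degree-one element. -/
lemma ell_pow_expansion (a : Fin m → ZMod p) (n : ℕ) :
    (∑ i : Fin m, a i • FreeAlgebra.ι (ZMod p) i) ^ n
      = ∑ f : Fin n → Fin m, (∏ j : Fin n, a (f j)) • magnusMonomial p m (List.ofFn f) := by
  induction n with
  | zero =>
    rw [pow_zero]
    rw [Finset.sum_eq_single (fun (j : Fin 0) => (Fin.elim0 j : Fin m))]
    · simp [magnusMonomial]
    · intro f _ hf
      exact absurd (funext fun j => Fin.elim0 j) hf
    · intro h
      exact absurd (Finset.mem_univ _) h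
  | succ n ih =>
    rw [pow_succ', ih, Finset.mul_sum]
    rw [← (Fin.consEquiv (fun _ : Fin (n + 1) => Fin m)).sum_comp
      (fun f => (∏ j : Fin (n + 1), a (f j)) • magnusMonomial p m (List.ofFn f))]
    rw [Fintype.sum_prod_type]
    rw [Finset.sum_comm]
    refine Finset.sum_congr rfl fun g _ => ?_
    rw [Finset.sum_mul]
    refine Finset.sum_congr rfl fun i _ => ?_
    have hcons : (Fin.consEquiv (fun _ : Fin (n + 1) => Fin m)) (i, g) = Fin.cons i g := rfl
    rw [hcons]
    have hofFn : List.ofFn (Fin.cons i g : Fin (n + 1) → Fin m) = i :: List.ofFn g := by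
      rw [List.ofFn_succ]
      simp [Fin.cons_zero, Fin.cons_succ]
    have hprod : (∏ j : Fin (n + 1), a ((Fin.cons i g : Fin (n + 1) → Fin m) j))
        = a i * ∏ j : Fin n, a (g j) := by
      rw [Fin.prod_univ_succ]
      simp [Fin.cons_zero, Fin.cons_succ]
    rw [hofFn, hprod, magnusMonomial_cons]
    rw [smul_mul_smul_comm]

end Aux

/-- Let `p` be a prime and `m` a positive integer; work in the truncated
algebra `A_{p+1}` over `ℤ/pℤ`.  For `u ∈ F_m`, if the degree-1 component of `E^p(u)` is
`Σᵢ aᵢ Xᵢ` (i.e. every representative of `E^p(u)` has coefficient `aᵢ` on `Xᵢ`), then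
`E^p(u^p) = 1 + Σ_{(i₁,…,i_p)} a_{i₁}⋯a_{i_p} X_{i₁}⋯X_{i_p}` in `A_{p+1}`. -/
theorem magnus_pow_p (p m : ℕ) (hp : p.Prime) (hm : 0 < m)
    (u : FreeGroup (Fin m)) (a : Fin m → ZMod p)
    (ha : ∀ t : FreeAlgebra (ZMod p) (Fin m),
      truncMk p m (p + 1) t = ↑(magnus p m (p + 1) u) →
        ∀ i : Fin m, magnusCoeff p m [i] t = a i) :
    (↑(magnus p m (p + 1) (u ^ p)) : TruncAlgebra p m (p + 1)) =
      1 + ∑ f : Fin p → Fin m, (∏ j : Fin p, a (f j)) •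
        truncMk p m (p + 1) (magnusMonomial p m (List.ofFn f)) := by
  haveI : Fact p.Prime := ⟨hp⟩
  haveI : CharP (FreeAlgebra (ZMod p) (Fin m)) p :=
    charP_of_injective_algebraMap FreeAlgebra.algebraMap_leftInverse.injective p
  obtain ⟨t, ht, hc0⟩ := magnus_has_lift p m p u
  have hai : ∀ i, magnusCoeff p m [i] t = a i := ha t ht
  set ℓ := ∑ i : Fin m, a i • FreeAlgebra.ι (ZMod p) i with hℓ
  set n := t - 1 with hndef
  clear_value n ℓ
  have htn : t = 1 + n := by rw [hndef]; noncomm_ring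
  have hnl2 : n - ℓ ∈ degSpan p m 2 := by
    have := sub_deg_le_one_mem_degSpan_two p m t
    rw [hc0, one_smul] at this
    have heq : t - 1 - (∑ i : Fin m, magnusCoeff p m [i] t • FreeAlgebra.ι (ZMod p) i)
        = n - ℓ := by
      rw [hndef, hℓ]
      congr 1
      refine Finset.sum_congr rfl fun i _ => ?_
      rw [hai i]
    rwa [heq] at this
  have hl1 : ℓ ∈ degSpan p m 1 := by
    rw [hℓ]
    refine Submodule.sum_mem _ fun i _ => ?_
    refine (degSpan p m 1).smul_mem _ ?_
    have : FreeAlgebra.ι (ZMod p) i = magnusMonomial p m [i] := by simp [magnusMonomial]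
    rw [this]
    exact magnusMonomial_mem_degSpan p m (by simp)
  have hn1 : n ∈ degSpan p m 1 := by
    have : n = (n - ℓ) + ℓ := by noncomm_ring
    rw [this]
    exact (degSpan p m 1).add_mem (degSpan_mono p m (by omega) hnl2) hl1
  -- n^p - ℓ^p ∈ degSpan (p+1)
  have hkey : ∀ j : ℕ, n ^ j - ℓ ^ j ∈ degSpan p m (j + 1) := by
    intro j
    induction j with
    | zero => simp
    | succ j ih =>
      have : n ^ (j + 1) - ℓ ^ (j + 1) = n * (n ^ j - ℓ ^ j) + (n - ℓ) * ℓ ^ j := by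
        rw [mul_sub, sub_mul, pow_succ' n j, pow_succ' ℓ j]
        abel
      rw [this]
      refine (degSpan p m (j + 2)).add_mem ?_ ?_
      · have := degSpan_mul p m hn1 ih
        exact degSpan_mono p m (by omega) this
      · have := degSpan_mul p m hnl2 (degSpan_pow p m hl1 j)
        exact degSpan_mono p m (by omega) this
  -- E(u^p) = truncMk (t^p)
  have hEup : (↑(magnus p m (p + 1) (u ^ p)) : TruncAlgebra p m (p + 1))
      = truncMk p m (p + 1) (t ^ p) := by
    rw [map_pow, Units.val_pow_eq_pow_val, ← ht, map_pow]
  -- t^p = 1 + n^p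
  have htp : t ^ p = 1 + n ^ p := by
    rw [htn, add_pow_char_of_commute _ (Commute.one_left n), one_pow]
  -- truncMk (n^p) = truncMk (ℓ^p)
  have hnp : truncMk p m (p + 1) (n ^ p) = truncMk p m (p + 1) (ℓ ^ p) := by
    have h0 : truncMk p m (p + 1) (n ^ p - ℓ ^ p) = 0 :=
      truncMk_eq_zero_of_degSpan p m (p + 1) (hkey p)
    rw [map_sub, sub_eq_zero] at h0
    exact h0
  rw [hEup, htp, map_add, map_one, hnp]
  congr 1
  rw [hℓ, ell_pow_expansion p m a p, map_sum]
  refine Finset.sum_congr rfl fun f _ => ?_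
  rw [truncMk_smul]
end

section
/- Let p be an odd prime. In the truncated algebra A_4 over ℤ/pℤ on X_1, …, X_5, the degree-3 component of E^p(r_1) has coefficient 0 on the monomial X_2X_3X_4 and coefficient 2 on the monomial X_4X_2X_3. -/
/-- The generators `x_1, …, x_5` of the free group `F_5` (`xF5 i` is `x_{i+1}`). -/
def xF5 (i : Fin 5) : FreeGroup (Fin 5) := FreeGroup.of i

/-- `Q_i = x_1x_2⁻¹x_3x_4⁻¹x_5x_1⁻¹x_2x_3⁻¹x_4x_5⁻¹ · x_i ·
x_5⁻¹x_4x_3⁻¹x_2x_1⁻¹x_5x_4⁻¹x_3x_2⁻¹x_1 ∈ F_5`. -/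
def QF5 (i : Fin 5) : FreeGroup (Fin 5) :=
  xF5 0 * (xF5 1)⁻¹ * xF5 2 * (xF5 3)⁻¹ * xF5 4 *
  (xF5 0)⁻¹ * xF5 1 * (xF5 2)⁻¹ * xF5 3 * (xF5 4)⁻¹ *
  xF5 i *
  (xF5 4)⁻¹ * xF5 3 * (xF5 2)⁻¹ * xF5 1 * (xF5 0)⁻¹ *
  xF5 4 * (xF5 3)⁻¹ * xF5 2 * (xF5 1)⁻¹ * xF5 0

/-- `r_i = Q_i x_i⁻¹`, the relators of the associated core group of the closure of
the 5-braid `(σ₁σ₂σ₃σ₄)^{10}`. -/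
def rF5 (i : Fin 5) : FreeGroup (Fin 5) := QF5 i * (xF5 i)⁻¹

namespace MagnusAux

variable (p : ℕ)

lemma equiv_monomial (w : List (Fin 5)) :
    FreeAlgebra.equivMonoidAlgebraFreeMonoid (R := ZMod p) (X := Fin 5) (magnusMonomial p 5 w)
      = MonoidAlgebra.single (FreeMonoid.ofList w) 1 := by
  induction w with
  | nil =>
    show FreeAlgebra.equivMonoidAlgebraFreeMonoid (1 : FreeAlgebra (ZMod p) (Fin 5)) = _
    rw [map_one, FreeMonoid.ofList_nil, MonoidAlgebra.one_def]
  | cons i w ih =>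
    have h : magnusMonomial p 5 (i :: w) = FreeAlgebra.ι (ZMod p) i * magnusMonomial p 5 w := by
      simp [magnusMonomial]
    rw [h, map_mul, ih]
    have hι : FreeAlgebra.equivMonoidAlgebraFreeMonoid (R := ZMod p) (X := Fin 5)
        (FreeAlgebra.ι _ i) = MonoidAlgebra.single (FreeMonoid.of i) 1 := by
      simp [FreeAlgebra.equivMonoidAlgebraFreeMonoid, FreeAlgebra.lift_ι_apply]
    rw [hι, MonoidAlgebra.single_mul_single, one_mul, FreeMonoid.ofList_cons]

lemma coeff_monomial (w w' : List (Fin 5)) :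
    magnusCoeff p 5 w (magnusMonomial p 5 w') = if w' = w then 1 else 0 := by
  classical
  rw [magnusCoeff, equiv_monomial, MonoidAlgebra.single_apply]
  by_cases h : w' = w
  · subst h; simp
  · rw [if_neg h, if_neg (fun hh => h (FreeMonoid.ofList.injective hh))]

lemma coeff_zero (w : List (Fin 5)) : magnusCoeff p 5 w 0 = 0 := by
  rw [magnusCoeff, map_zero]; rfl

lemma coeff_add (w : List (Fin 5)) (a b : FreeAlgebra (ZMod p) (Fin 5)) :
    magnusCoeff p 5 w (a + b) = magnusCoeff p 5 w a + magnusCoeff p 5 w b := by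
  rw [magnusCoeff, map_add]; rfl

lemma coeff_sub (w : List (Fin 5)) (a b : FreeAlgebra (ZMod p) (Fin 5)) :
    magnusCoeff p 5 w (a - b) = magnusCoeff p 5 w a - magnusCoeff p 5 w b := by
  rw [magnusCoeff, map_sub]; rfl

lemma coeff_mul (w : List (Fin 5)) (a b : FreeAlgebra (ZMod p) (Fin 5)) :
    magnusCoeff p 5 w (a * b) =
      ∑ n ∈ Finset.range (w.length + 1),
        magnusCoeff p 5 (w.take n) a * magnusCoeff p 5 (w.drop n) b := by
  classical
  have hs : ∀ {q : FreeMonoid (Fin 5) × FreeMonoid (Fin 5)},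
      q ∈ (Finset.range (w.length + 1)).image
        (fun n => (FreeMonoid.ofList (w.take n), FreeMonoid.ofList (w.drop n))) ↔
      q.1 * q.2 = FreeMonoid.ofList w := by
    intro q
    constructor
    · intro hq
      simp only [Finset.mem_image, Finset.mem_range] at hq
      obtain ⟨n, _, rfl⟩ := hq
      rw [← FreeMonoid.ofList_append, List.take_append_drop]
    · intro hq
      simp only [Finset.mem_image, Finset.mem_range, Nat.lt_succ_iff]
      refine ⟨(FreeMonoid.toList q.1).length, ?_, ?_⟩
      · have h1 := congrArg (fun z => (FreeMonoid.toList z).length) hq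
        simp only [FreeMonoid.toList_mul, List.length_append, FreeMonoid.toList_ofList] at h1
        omega
      · have hw : FreeMonoid.toList q.1 ++ FreeMonoid.toList q.2 = w := by
          have h2 := congrArg FreeMonoid.toList hq
          simpa [FreeMonoid.toList_mul] using h2
        have ht : w.take (FreeMonoid.toList q.1).length = FreeMonoid.toList q.1 := by
          rw [← hw]; simp
        have hd : w.drop (FreeMonoid.toList q.1).length = FreeMonoid.toList q.2 := by
          rw [← hw]; simp
        rw [ht, hd]
        exact Prod.ext (FreeMonoid.ofList_toList q.1) (FreeMonoid.ofList_toList q.2)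
  have hinj : ∀ n ∈ Finset.range (w.length + 1), ∀ n' ∈ Finset.range (w.length + 1),
      (fun n => (FreeMonoid.ofList (w.take n), FreeMonoid.ofList (w.drop n))) n =
      (fun n => (FreeMonoid.ofList (w.take n), FreeMonoid.ofList (w.drop n))) n' → n = n' := by
    intro n hn n' hn' h
    simp only [Finset.mem_range, Nat.lt_succ_iff] at hn hn'
    have h1 := congrArg (fun q => (FreeMonoid.toList q.1).length) h
    simp only [FreeMonoid.toList_ofList, List.length_take] at h1
    omega
  rw [magnusCoeff, map_mul, MonoidAlgebra.mul_apply_antidiagonal _ _ _ _ hs,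
    Finset.sum_image hinj]
  rfl

def letterRep : Fin 5 × Bool → FreeAlgebra (ZMod p) (Fin 5)
  | (i, true) => 1 + FreeAlgebra.ι (ZMod p) i
  | (i, false) => 1 - FreeAlgebra.ι (ZMod p) i + (FreeAlgebra.ι (ZMod p) i) ^ 2
      - (FreeAlgebra.ι (ZMod p) i) ^ 3

def wordRep : List (Fin 5 × Bool) → FreeAlgebra (ZMod p) (Fin 5)
  | [] => 1
  | l :: L => letterRep p l * wordRep L

def dInt (l : Fin 5 × Bool) (u : List (Fin 5)) : ℤ :=
  match l with
  | (i, true) => if [] = u ∨ [i] = u then 1 else 0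
  | (i, false) => if [] = u then 1 else if [i] = u then -1
      else if [i, i] = u then 1 else if [i, i, i] = u then -1 else 0

def cInt : List (Fin 5 × Bool) → List (Fin 5) → ℤ
  | [], w => if [] = w then 1 else 0
  | l :: L, w => ∑ n ∈ Finset.range (w.length + 1), dInt l (w.take n) * cInt L (w.drop n)

lemma ipow_eq (i : Fin 5) (n : ℕ) :
    (FreeAlgebra.ι (ZMod p) i) ^ n = magnusMonomial p 5 (List.replicate n i) := by
  simp [magnusMonomial, List.map_replicate, List.prod_replicate]

lemma one_eq_monomial : (1 : FreeAlgebra (ZMod p) (Fin 5)) = magnusMonomial p 5 [] := by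
  simp [magnusMonomial]

lemma i_eq_monomial (i : Fin 5) :
    FreeAlgebra.ι (ZMod p) i = magnusMonomial p 5 [i] := by
  simp [magnusMonomial]

lemma coeff_letterRep (l : Fin 5 × Bool) (u : List (Fin 5)) :
    magnusCoeff p 5 u (letterRep p l) = (dInt l u : ZMod p) := by
  obtain ⟨i, b⟩ := l
  cases b with
  | true =>
    show magnusCoeff p 5 u (1 + FreeAlgebra.ι (ZMod p) i) = _
    rw [coeff_add, one_eq_monomial, i_eq_monomial, coeff_monomial, coeff_monomial, dInt]
    by_cases hu1 : [] = u <;> by_cases hu2 : [i] = u <;> simp_all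
  | false =>
    show magnusCoeff p 5 u (1 - FreeAlgebra.ι (ZMod p) i + (FreeAlgebra.ι (ZMod p) i) ^ 2
      - (FreeAlgebra.ι (ZMod p) i) ^ 3) = _
    rw [coeff_sub, coeff_add, coeff_sub, ipow_eq, ipow_eq, one_eq_monomial, i_eq_monomial,
      coeff_monomial, coeff_monomial, coeff_monomial, coeff_monomial, dInt]
    have h2 : List.replicate 2 i = [i, i] := rfl
    have h3 : List.replicate 3 i = [i, i, i] := rfl
    rw [h2, h3]
    rcases u with _ | ⟨a, _ | ⟨b, _ | ⟨c, _ | ⟨d, v⟩⟩⟩⟩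
    · simp
    · by_cases h : i = a <;> simp [h]
    · by_cases h : ([i, i] : List (Fin 5)) = [a, b] <;> simp [h]
    · by_cases h : ([i, i, i] : List (Fin 5)) = [a, b, c] <;> simp [h]
    · simp

lemma coeff_wordRep (L : List (Fin 5 × Bool)) (w : List (Fin 5)) :
    magnusCoeff p 5 w (wordRep p L) = (cInt L w : ZMod p) := by
  induction L generalizing w with
  | nil =>
    rw [wordRep, cInt, one_eq_monomial, coeff_monomial]
    by_cases h : [] = w <;> simp [h]
  | cons l L ih =>
    rw [wordRep, coeff_mul, cInt]
    push_cast
    refine Finset.sum_congr rfl fun n _ => ?_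
    rw [coeff_letterRep, ih]

lemma coeff_invariant {a b : FreeAlgebra (ZMod p) (Fin 5)}
    (h : RingQuot.Rel (truncRel p 5 4) a b) :
    ∀ w : List (Fin 5), w.length ≤ 3 → magnusCoeff p 5 w a = magnusCoeff p 5 w b := by
  induction h with
  | of h =>
    obtain ⟨w', hw', ha, hb⟩ := h
    subst ha hb
    intro w hw
    rw [coeff_monomial, coeff_zero, if_neg (fun hww => by rw [hww] at hw'; omega)]
  | add_left h ih =>
    intro w hw
    rw [coeff_add, coeff_add, ih w hw]
  | mul_left h ih =>
    intro w hw
    rw [coeff_mul, coeff_mul]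
    refine Finset.sum_congr rfl fun n _ => ?_
    have hlen : (w.take n).length ≤ 3 := le_trans (by simp [Nat.min_le_right]) hw
    rw [ih (w.take n) hlen]
  | mul_right h ih =>
    intro w hw
    rw [coeff_mul, coeff_mul]
    refine Finset.sum_congr rfl fun n _ => ?_
    have hlen : (w.drop n).length ≤ 3 := le_trans (by simp) hw
    rw [ih (w.drop n) hlen]

lemma coeff_eq_of_truncMk_eq {a b : FreeAlgebra (ZMod p) (Fin 5)}
    (h : truncMk p 5 4 a = truncMk p 5 4 b)
    (w : List (Fin 5)) (hw : w.length ≤ 3) :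
    magnusCoeff p 5 w a = magnusCoeff p 5 w b := by
  have hq : Quot.mk (RingQuot.Rel (truncRel p 5 4)) a = Quot.mk _ b := by
    rw [truncMk, RingQuot.mkRingHom_def] at h
    exact congrArg RingQuot.toQuot h
  have h3 := Quot.eqvGen_exact hq
  clear h hq
  induction h3 with
  | rel x y hxy => exact coeff_invariant p hxy w hw
  | refl x => rfl
  | symm x y _ ih => exact ih.symm
  | trans x y z _ _ ih1 ih2 => exact ih1.trans ih2

def Lr1 : List (Fin 5 × Bool) :=
  [(0, true), (1, false), (2, true), (3, false), (4, true),
   (0, false), (1, true), (2, false), (3, true), (4, false),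
   (0, true),
   (4, false), (3, true), (2, false), (1, true), (0, false),
   (4, true), (3, false), (2, true), (1, false), (0, true),
   (0, false)]

lemma coe_magnus_pos (i : Fin 5) :
    ((magnus p 5 4 (xF5 i) : (TruncAlgebra p 5 4)ˣ) : TruncAlgebra p 5 4)
      = truncMk p 5 4 (letterRep p (i, true)) := by
  rw [magnus, xF5, FreeGroup.lift_apply_of, IsUnit.unit_spec]
  show _ = truncMk p 5 4 (1 + FreeAlgebra.ι (ZMod p) i)
  rw [map_add, map_one]

lemma coe_magnus_neg (i : Fin 5) :
    ((magnus p 5 4 ((xF5 i)⁻¹) : (TruncAlgebra p 5 4)ˣ) : TruncAlgebra p 5 4)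
      = truncMk p 5 4 (letterRep p (i, false)) := by
  rw [map_inv]
  set u : (TruncAlgebra p 5 4)ˣ := magnus p 5 4 (xF5 i) with hu
  have hcu : (u : TruncAlgebra p 5 4) = truncMk p 5 4 (letterRep p (i, true)) :=
    coe_magnus_pos p i
  have key : truncMk p 5 4 (letterRep p (i, false)) * (u : TruncAlgebra p 5 4) = 1 := by
    rw [hcu, ← map_mul]
    have alg : letterRep p (i, false) * letterRep p (i, true)
        = 1 - (FreeAlgebra.ι (ZMod p) i) ^ 4 := by
      show (1 - FreeAlgebra.ι (ZMod p) i + (FreeAlgebra.ι (ZMod p) i) ^ 2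
          - (FreeAlgebra.ι (ZMod p) i) ^ 3) * (1 + FreeAlgebra.ι (ZMod p) i) = _
      noncomm_ring
    rw [alg, map_sub, map_one]
    have h4 : truncMk p 5 4 ((FreeAlgebra.ι (ZMod p) i) ^ 4) = 0 := by
      rw [ipow_eq]
      have hr := RingQuot.mkRingHom_rel (r := truncRel p 5 4)
        ⟨List.replicate 4 i, List.length_replicate, rfl, rfl⟩
      show RingQuot.mkRingHom (truncRel p 5 4) _ = 0
      rw [hr, map_zero]
    rw [h4, sub_zero]
  calc ((u⁻¹ : (TruncAlgebra p 5 4)ˣ) : TruncAlgebra p 5 4)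
      = 1 * ((u⁻¹ : (TruncAlgebra p 5 4)ˣ) : TruncAlgebra p 5 4) := (one_mul _).symm
    _ = truncMk p 5 4 (letterRep p (i, false)) * ((u : TruncAlgebra p 5 4)
          * ((u⁻¹ : (TruncAlgebra p 5 4)ˣ) : TruncAlgebra p 5 4)) := by
        rw [← mul_assoc, key]
    _ = truncMk p 5 4 (letterRep p (i, false)) := by
        rw [u.mul_inv, mul_one]

lemma coe_magnus_r1 :
    ((magnus p 5 4 (rF5 0) : (TruncAlgebra p 5 4)ˣ) : TruncAlgebra p 5 4)
      = truncMk p 5 4 (wordRep p Lr1) := by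
  rw [rF5, QF5]
  simp only [map_mul, Units.val_mul, coe_magnus_pos, coe_magnus_neg,
    Lr1, wordRep, map_mul, map_one, mul_one, mul_assoc]

end MagnusAux

set_option maxHeartbeats 1600000 in
lemma MagnusAux.cInt_val1 : MagnusAux.cInt MagnusAux.Lr1 [1, 2, 3] = 0 := by decide

set_option maxHeartbeats 1600000 in
lemma MagnusAux.cInt_val2 : MagnusAux.cInt MagnusAux.Lr1 [3, 1, 2] = 2 := by decide

/-- For an odd prime `p`, in `A_4` over `ℤ/pℤ` on `X_1, …, X_5` the
degree-3 component of `E^p(r_1)` has coefficient `0` on `X_2X_3X_4` and coefficient `2`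
on `X_4X_2X_3`.  (The coefficient of a monomial in an element of `A_4` is computed via
any representative in the free algebra `T`.) -/
theorem magnus_rF5_coeff (p : ℕ) (hp : p.Prime) (hodd : Odd p) :
    ∀ t : FreeAlgebra (ZMod p) (Fin 5),
      truncMk p 5 4 t = ↑(magnus p 5 4 (rF5 0)) →
        magnusCoeff p 5 [1, 2, 3] t = 0 ∧ magnusCoeff p 5 [3, 1, 2] t = 2 := by
  intro t ht
  have hkey : truncMk p 5 4 t = truncMk p 5 4 (MagnusAux.wordRep p MagnusAux.Lr1) :=
    ht.trans (MagnusAux.coe_magnus_r1 p)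
  constructor
  · rw [MagnusAux.coeff_eq_of_truncMk_eq p hkey [1, 2, 3] (by norm_num),
      MagnusAux.coeff_wordRep, MagnusAux.cInt_val1]
    exact Int.cast_zero
  · rw [MagnusAux.coeff_eq_of_truncMk_eq p hkey [3, 1, 2] (by norm_num),
      MagnusAux.coeff_wordRep, MagnusAux.cInt_val2]
    exact Int.cast_two
end

section
/- For every odd prime p, the element r_1 ∈ F_5 does not belong to the subgroup W̄_p · γ_{p+1} F_5. -/


@[ext] structure N3 (R : Type) [CommRing R] where
  a : Fin 5 → R
  B : Fin 5 → Fin 5 → R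
  c : R

namespace N3
variable {R : Type} [CommRing R]
instance : Mul (N3 R) := ⟨fun g h =>
  ⟨fun i => g.a i + h.a i,
   fun i j => g.B i j + h.B i j + g.a i * h.a j,
   g.c + h.c + (g.a 2 * h.B 1 3 - g.a 1 * h.B 2 3) + (g.B 2 1 - g.B 1 2) * h.a 3⟩⟩
instance : One (N3 R) := ⟨⟨fun _ => 0, fun _ _ => 0, 0⟩⟩
instance : Inv (N3 R) := ⟨fun g =>
  ⟨fun i => -g.a i,
   fun i j => g.a i * g.a j - g.B i j,
   -g.c - (g.a 2 * (g.a 1 * g.a 3 - g.B 1 3) - g.a 1 * (g.a 2 * g.a 3 - g.B 2 3))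
     + (g.B 2 1 - g.B 1 2) * g.a 3⟩⟩
@[simp] lemma mul_a (g h : N3 R) (i : Fin 5) : (g * h).a i = g.a i + h.a i := rfl
@[simp] lemma mul_B (g h : N3 R) (i j : Fin 5) :
    (g * h).B i j = g.B i j + h.B i j + g.a i * h.a j := rfl
@[simp] lemma mul_c (g h : N3 R) :
    (g * h).c = g.c + h.c + (g.a 2 * h.B 1 3 - g.a 1 * h.B 2 3)
      + (g.B 2 1 - g.B 1 2) * h.a 3 := rfl
@[simp] lemma inv_a (g : N3 R) (i : Fin 5) : (g⁻¹).a i = -g.a i := rfl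
@[simp] lemma inv_B (g : N3 R) (i j : Fin 5) : (g⁻¹).B i j = g.a i * g.a j - g.B i j := rfl
@[simp] lemma inv_c (g : N3 R) :
    (g⁻¹).c = -g.c - (g.a 2 * (g.a 1 * g.a 3 - g.B 1 3) - g.a 1 * (g.a 2 * g.a 3 - g.B 2 3))
      + (g.B 2 1 - g.B 1 2) * g.a 3 := rfl
@[simp] lemma one_a (i : Fin 5) : (1 : N3 R).a i = 0 := rfl
@[simp] lemma one_B (i j : Fin 5) : (1 : N3 R).B i j = 0 := rfl
@[simp] lemma one_c : (1 : N3 R).c = 0 := rfl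
instance : Group (N3 R) where
  mul_assoc g h k := by ext <;> (simp; try ring)
  one_mul g := by ext <;> simp
  mul_one g := by ext <;> simp
  inv_mul_cancel g := by ext <;> (simp; try ring)
end N3


def genN3 {R : Type} [CommRing R] (i : Fin 5) : N3 R :=
  ⟨fun j => if j = i then 1 else 0, fun _ _ => 0, 0⟩

noncomputable def phiN3 (R : Type) [CommRing R] : FreeGroup (Fin 5) →* N3 R :=
  FreeGroup.lift genN3

@[simp] lemma genN3_a {R : Type} [CommRing R] (i j : Fin 5) :
    (genN3 (R := R) i).a j = if j = i then 1 else 0 := rfl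
@[simp] lemma genN3_B {R : Type} [CommRing R] (i j k : Fin 5) :
    (genN3 (R := R) i).B j k = 0 := rfl
@[simp] lemma genN3_c {R : Type} [CommRing R] (i : Fin 5) :
    (genN3 (R := R) i).c = 0 := rfl

set_option maxHeartbeats 4000000 in
lemma phi_r1_c {R : Type} [CommRing R] : (phiN3 R (rF5 0)).c = 2 := by
  simp only [rF5, QF5, xF5, phiN3, map_mul, map_inv, FreeGroup.lift_apply_of]
  simp (config := { decide := true })
  norm_num


open scoped commutatorElement

namespace N3
variable {R : Type} [CommRing R]

lemma pow_eq (g : N3 R) (n : ℕ) : g ^ n =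
    ⟨fun i => (n : R) * g.a i,
     fun i j => (n : R) * g.B i j + (n.choose 2 : R) * (g.a i * g.a j),
     (n : R) * g.c + (n.choose 2 : R) *
       ((g.a 2 * g.B 1 3 - g.a 1 * g.B 2 3) + (g.B 2 1 - g.B 1 2) * g.a 3)⟩ := by
  induction n with
  | zero => ext <;> simp
  | succ n ih =>
    rw [pow_succ, ih]
    have hch : ((n + 1).choose 2 : R) = (n.choose 2 : R) + (n : R) := by
      rw [Nat.choose_succ_succ, Nat.choose_one_right]; push_cast; ring
    ext <;> simp [hch] <;> push_cast <;> ring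

lemma pow_prime (p : ℕ) (hp : p.Prime) (h2 : p ≠ 2) (g : N3 (ZMod p)) : g ^ p = 1 := by
  have hdvd : p ∣ p.choose 2 := hp.dvd_choose_self (by norm_num)
    (lt_of_le_of_ne hp.two_le (Ne.symm h2))
  have h1 : ((p : ℕ) : ZMod p) = 0 := ZMod.natCast_self p
  have h2' : ((p.choose 2 : ℕ) : ZMod p) = 0 :=
    (ZMod.natCast_eq_zero_iff _ _).mpr hdvd
  rw [pow_eq]
  ext <;> simp [h1, h2']

/-- Elements with vanishing linear part. -/
def H1 : Subgroup (N3 R) where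
  carrier := {g | ∀ i, g.a i = 0}
  one_mem' := fun _ => rfl
  mul_mem' := by intro g h hg hh i; simp [hg i, hh i]
  inv_mem' := by intro g hg i; simp [hg i]

/-- Elements with vanishing linear and quadratic part (these are central). -/
def H2 : Subgroup (N3 R) where
  carrier := {g | (∀ i, g.a i = 0) ∧ ∀ i j, g.B i j = 0}
  one_mem' := ⟨fun _ => rfl, fun _ _ => rfl⟩
  mul_mem' := by
    rintro g h ⟨hg1, hg2⟩ ⟨hh1, hh2⟩
    exact ⟨fun i => by simp [hg1 i, hh1 i], fun i j => by simp [hg1 i, hh1 i, hg2, hh2]⟩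
  inv_mem' := by
    rintro g ⟨hg1, hg2⟩
    exact ⟨fun i => by simp [hg1 i], fun i j => by simp [hg1 i, hg1 j, hg2]⟩

lemma commA (g h : N3 R) (i : Fin 5) : (⁅g, h⁆ : N3 R).a i = 0 := by
  show (g * h * g⁻¹ * h⁻¹).a i = 0
  simp

lemma commB (g h : N3 R) (hg : ∀ i, g.a i = 0) (i j : Fin 5) : (⁅g, h⁆ : N3 R).B i j = 0 := by
  show (g * h * g⁻¹ * h⁻¹).B i j = 0
  simp [hg]

lemma central (z h : N3 R) (hz1 : ∀ i, z.a i = 0) (hz2 : ∀ i j, z.B i j = 0) :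
    (⁅z, h⁆ : N3 R) = 1 := by
  show z * h * z⁻¹ * h⁻¹ = 1
  ext <;> simp [hz1, hz2] <;> ring

lemma lcs3 : (⊤ : Subgroup (N3 R)).lowerCentralSeries 3 = ⊥ := by
  have h1 : (⊤ : Subgroup (N3 R)).lowerCentralSeries 1 ≤ (H1 : Subgroup (N3 R)) := by
    rw [show (1 : ℕ) = 0 + 1 from rfl, Subgroup.lowerCentralSeries_succ]
    refine Subgroup.commutator_le.mpr fun g _ h _ => ?_
    exact fun i => commA g h i
  have h2 : (⊤ : Subgroup (N3 R)).lowerCentralSeries 2 ≤ (H2 : Subgroup (N3 R)) := by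
    rw [show (2 : ℕ) = 1 + 1 from rfl, Subgroup.lowerCentralSeries_succ]
    refine le_trans (Subgroup.commutator_mono h1 le_top) ?_
    refine Subgroup.commutator_le.mpr fun g hg h _ => ?_
    exact ⟨commA g h, commB g h hg⟩
  rw [eq_bot_iff, show (3 : ℕ) = 2 + 1 from rfl, Subgroup.lowerCentralSeries_succ]
  refine le_trans (Subgroup.commutator_mono h2 le_top) ?_
  refine Subgroup.commutator_le.mpr fun g hg h _ => ?_
  simpa [Subgroup.mem_bot] using central g h hg.1 hg.2

end N3

set_option maxHeartbeats 1000000 in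
/-- For every odd prime `p`, the element `r_1 ∈ F_5` does not belong to
the subgroup `W̄_p · γ_{p+1} F_5`. -/
theorem rF5_not_mem_WbarGamma (p : ℕ) (hp : p.Prime) (hodd : Odd p) :
    rF5 0 ∉ WbarGamma 5 p (p + 1) := by
  have h2 : p ≠ 2 := by rintro rfl; exact (by decide : ¬ Odd 2) hodd
  have h3 : 3 ≤ p := by have := hp.two_le; omega
  intro hmem
  have hker : WbarGamma 5 p (p + 1) ≤ (phiN3 (ZMod p)).ker := by
    rw [WbarGamma]
    simp only [Nat.add_sub_cancel]
    apply sup_le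
    · apply Subgroup.normalClosure_le_normal
      rintro x ⟨w, rfl⟩
      simp only [SetLike.mem_coe, MonoidHom.mem_ker, map_pow]
      exact N3.pow_prime p hp h2 _
    · intro x hx
      have h1 : phiN3 (ZMod p) x ∈ (⊤ : Subgroup (N3 (ZMod p))).lowerCentralSeries p :=
        Subgroup.lowerCentralSeries.map (phiN3 (ZMod p)) p (Subgroup.mem_map_of_mem _ hx)
      have h4 : (⊤ : Subgroup (N3 (ZMod p))).lowerCentralSeries p ≤ (⊤ : Subgroup (N3 (ZMod p))).lowerCentralSeries 3 :=
        Subgroup.lowerCentralSeries_antitone _ h3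
      rw [MonoidHom.mem_ker]
      simpa [N3.lcs3, Subgroup.mem_bot, -Subgroup.lowerCentralSeries_succ] using h4 h1
  have h1 : phiN3 (ZMod p) (rF5 0) = 1 := hker hmem
  have hc := congrArg N3.c h1
  rw [phi_r1_c] at hc
  have hc2 : ((2 : ℕ) : ZMod p) = 0 := by simpa using hc
  have hdvd := (ZMod.natCast_eq_zero_iff 2 p).mp hc2
  have := Nat.le_of_dvd (by norm_num) hdvd
  omega
end

section
/- For every odd prime p, the element r_6 ∈ F_6 does not belong to the subgroup W̄_p · γ_{p+1} F_6. -/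
/-! ### Auxiliary: the unitriangular-type group `UTg R` (class 3, exponent p for p ≥ 5) -/

@[ext] structure UTg (R : Type) where
  a : R
  b : R
  c : R
  d : R
  e : R
  f : R

namespace UTg

variable {R : Type} [CommRing R]

instance : One (UTg R) := ⟨⟨0, 0, 0, 0, 0, 0⟩⟩
instance : Mul (UTg R) :=
  ⟨fun u v => ⟨u.a + v.a, u.b + v.b + u.a * v.d, u.c + v.c + u.a * v.e + u.b * v.f,
    u.d + v.d, u.e + v.e + u.d * v.f, u.f + v.f⟩⟩
instance : Inv (UTg R) :=
  ⟨fun u => ⟨-u.a, -u.b + u.a * u.d, -u.c + u.a * u.e + u.b * u.f - u.a * u.d * u.f,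
    -u.d, -u.e + u.d * u.f, -u.f⟩⟩

@[simp] lemma one_a : (1 : UTg R).a = 0 := rfl
@[simp] lemma one_b : (1 : UTg R).b = 0 := rfl
@[simp] lemma one_c : (1 : UTg R).c = 0 := rfl
@[simp] lemma one_d : (1 : UTg R).d = 0 := rfl
@[simp] lemma one_e : (1 : UTg R).e = 0 := rfl
@[simp] lemma one_f : (1 : UTg R).f = 0 := rfl

@[simp] lemma mul_a (u v : UTg R) : (u * v).a = u.a + v.a := rfl
@[simp] lemma mul_b (u v : UTg R) : (u * v).b = u.b + v.b + u.a * v.d := rfl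
@[simp] lemma mul_c (u v : UTg R) : (u * v).c = u.c + v.c + u.a * v.e + u.b * v.f := rfl
@[simp] lemma mul_d (u v : UTg R) : (u * v).d = u.d + v.d := rfl
@[simp] lemma mul_e (u v : UTg R) : (u * v).e = u.e + v.e + u.d * v.f := rfl
@[simp] lemma mul_f (u v : UTg R) : (u * v).f = u.f + v.f := rfl

@[simp] lemma inv_a (u : UTg R) : (u⁻¹).a = -u.a := rfl
@[simp] lemma inv_b (u : UTg R) : (u⁻¹).b = -u.b + u.a * u.d := rfl
@[simp] lemma inv_c (u : UTg R) :
    (u⁻¹).c = -u.c + u.a * u.e + u.b * u.f - u.a * u.d * u.f := rfl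
@[simp] lemma inv_d (u : UTg R) : (u⁻¹).d = -u.d := rfl
@[simp] lemma inv_e (u : UTg R) : (u⁻¹).e = -u.e + u.d * u.f := rfl
@[simp] lemma inv_f (u : UTg R) : (u⁻¹).f = -u.f := rfl

instance : Group (UTg R) :=
  { mul := (· * ·), one := 1, inv := (·⁻¹),
    mul_assoc := by intro u v w; ext <;> simp <;> ring
    one_mul := by intro u; ext <;> simp
    mul_one := by intro u; ext <;> simp
    inv_mul_cancel := by intro u; ext <;> simp <;> ring }

lemma pow_formula (u : UTg R) (n : ℕ) :
    u ^ n = ⟨(n : R) * u.a,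
      (n : R) * u.b + (n.choose 2 : R) * u.a * u.d,
      (n : R) * u.c + (n.choose 2 : R) * (u.a * u.e + u.b * u.f)
        + (n.choose 3 : R) * (u.a * u.d * u.f),
      (n : R) * u.d,
      (n : R) * u.e + (n.choose 2 : R) * u.d * u.f,
      (n : R) * u.f⟩ := by
  induction n with
  | zero => ext <;> simp
  | succ n ih =>
      have h2 : ((n + 1).choose 2 : R) = (n.choose 2 : R) + (n : R) := by
        rw [show (n + 1).choose 2 = n.choose 1 + n.choose 2 from Nat.choose_succ_succ n 1]
        push_cast [Nat.choose_one_right]; ring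
      have h3 : ((n + 1).choose 3 : R) = (n.choose 3 : R) + (n.choose 2 : R) := by
        rw [show (n + 1).choose 3 = n.choose 2 + n.choose 3 from Nat.choose_succ_succ n 2]
        push_cast; ring
      rw [pow_succ, ih]
      ext <;> simp [h2, h3] <;> push_cast <;> ring

lemma pow_prime_eq_one (p : ℕ) (hp : p.Prime) (h5 : 5 ≤ p) (u : UTg (ZMod p)) :
    u ^ p = 1 := by
  have hc2 : ((p.choose 2 : ℕ) : ZMod p) = 0 :=
    (ZMod.natCast_eq_zero_iff _ _).mpr
      (hp.dvd_choose_self (by norm_num) (by omega))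
  have hc3 : ((p.choose 3 : ℕ) : ZMod p) = 0 :=
    (ZMod.natCast_eq_zero_iff _ _).mpr
      (hp.dvd_choose_self (by norm_num) (by omega))
  rw [pow_formula]
  ext <;> simp [hc2, hc3, ZMod.natCast_self]

/-- The subgroup `{u | u.a = u.d = u.f = 0}` of `UTg R`. -/
def sgA : Subgroup (UTg R) where
  carrier := {u | u.a = 0 ∧ u.d = 0 ∧ u.f = 0}
  one_mem' := by simp [Set.mem_setOf_eq]
  mul_mem' := by
    rintro u v ⟨h1, h2, h3⟩ ⟨h4, h5, h6⟩
    simp_all [Set.mem_setOf_eq]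
  inv_mem' := by
    rintro u ⟨h1, h2, h3⟩
    simp_all [Set.mem_setOf_eq]

/-- The central subgroup `{u | only c may be nonzero}` of `UTg R`. -/
def sgB : Subgroup (UTg R) where
  carrier := {u | u.a = 0 ∧ u.b = 0 ∧ u.d = 0 ∧ u.e = 0 ∧ u.f = 0}
  one_mem' := by simp [Set.mem_setOf_eq]
  mul_mem' := by
    rintro u v ⟨h1, h2, h3, h4, h5⟩ ⟨h6, h7, h8, h9, h10⟩
    simp_all [Set.mem_setOf_eq]
  inv_mem' := by
    rintro u ⟨h1, h2, h3, h4, h5⟩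
    simp_all [Set.mem_setOf_eq]

lemma lcs_three_eq_bot : (⊤ : Subgroup (UTg R)).lowerCentralSeries 3 = ⊥ := by
  have h1 : (⊤ : Subgroup (UTg R)).lowerCentralSeries 1 ≤ (sgA : Subgroup (UTg R)) := by
    rw [show (1 : ℕ) = 0 + 1 from rfl, lowerCentralSeries_succ]
    rw [Subgroup.commutator_le]
    intro g _ h _
    simp only [commutatorElement_def, sgA, Subgroup.mem_mk, Set.mem_setOf_eq]
    refine ⟨?_, ?_, ?_⟩ <;> simp <;> ring
  have h2 : (⊤ : Subgroup (UTg R)).lowerCentralSeries 2 ≤ (sgB : Subgroup (UTg R)) := by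
    rw [show (2 : ℕ) = 1 + 1 from rfl, lowerCentralSeries_succ]
    refine le_trans (Subgroup.commutator_mono h1 le_top) ?_
    rw [Subgroup.commutator_le]
    intro g hg h _
    obtain ⟨ha, hd, hf⟩ := hg
    simp only [commutatorElement_def, sgB, Subgroup.mem_mk, Set.mem_setOf_eq]
    refine ⟨?_, ?_, ?_, ?_, ?_⟩ <;> simp [ha, hd, hf] <;> ring
  rw [show (3 : ℕ) = 2 + 1 from rfl, lowerCentralSeries_succ, ← le_bot_iff]
  refine le_trans (Subgroup.commutator_mono h2 le_top) ?_
  rw [Subgroup.commutator_le]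
  intro g hg h _
  obtain ⟨ha, hb, hd, he, hf⟩ := hg
  rw [Subgroup.mem_bot, commutatorElement_eq_one_iff_commute]
  show g * h = h * g
  ext <;> simp [ha, hb, hd, he, hf] <;> ring

end UTg

/-! ### Auxiliary: a model `B3` of a Burnside-type group of exponent 3 and class 3 -/

@[ext] structure B3 where
  x : ZMod 3
  y : ZMod 3
  z : ZMod 3
  q : ZMod 3
  r : ZMod 3
  s : ZMod 3
  t : ZMod 3

namespace B3

lemma three_eq_zero : (3 : ZMod 3) = 0 := by decide

instance : One B3 := ⟨⟨0, 0, 0, 0, 0, 0, 0⟩⟩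
instance : Mul B3 :=
  ⟨fun u v => ⟨u.x + v.x, u.y + v.y, u.z + v.z,
    u.q + v.q + v.x * u.y, u.r + v.r + v.x * u.z, u.s + v.s + v.y * u.z,
    u.t + v.t + u.q * v.z - u.r * v.y + u.s * v.x
      + v.x * u.y * u.z + v.x * u.y * v.z - v.x * v.y * u.z⟩⟩
instance : Inv B3 :=
  ⟨fun u => ⟨-u.x, -u.y, -u.z, -u.q + u.x * u.y, -u.r + u.x * u.z, -u.s + u.y * u.z,
    -u.t + u.q * u.z - u.r * u.y + u.s * u.x - 2 * (u.x * u.y * u.z)⟩⟩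

@[simp] lemma one_x : (1 : B3).x = 0 := rfl
@[simp] lemma one_y : (1 : B3).y = 0 := rfl
@[simp] lemma one_z : (1 : B3).z = 0 := rfl
@[simp] lemma one_q : (1 : B3).q = 0 := rfl
@[simp] lemma one_r : (1 : B3).r = 0 := rfl
@[simp] lemma one_s : (1 : B3).s = 0 := rfl
@[simp] lemma one_t : (1 : B3).t = 0 := rfl

@[simp] lemma mul_x (u v : B3) : (u * v).x = u.x + v.x := rfl
@[simp] lemma mul_y (u v : B3) : (u * v).y = u.y + v.y := rfl
@[simp] lemma mul_z (u v : B3) : (u * v).z = u.z + v.z := rfl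
@[simp] lemma mul_q (u v : B3) : (u * v).q = u.q + v.q + v.x * u.y := rfl
@[simp] lemma mul_r (u v : B3) : (u * v).r = u.r + v.r + v.x * u.z := rfl
@[simp] lemma mul_s (u v : B3) : (u * v).s = u.s + v.s + v.y * u.z := rfl
@[simp] lemma mul_t (u v : B3) :
    (u * v).t = u.t + v.t + u.q * v.z - u.r * v.y + u.s * v.x
      + v.x * u.y * u.z + v.x * u.y * v.z - v.x * v.y * u.z := rfl

@[simp] lemma inv_x (u : B3) : (u⁻¹).x = -u.x := rfl
@[simp] lemma inv_y (u : B3) : (u⁻¹).y = -u.y := rfl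
@[simp] lemma inv_z (u : B3) : (u⁻¹).z = -u.z := rfl
@[simp] lemma inv_q (u : B3) : (u⁻¹).q = -u.q + u.x * u.y := rfl
@[simp] lemma inv_r (u : B3) : (u⁻¹).r = -u.r + u.x * u.z := rfl
@[simp] lemma inv_s (u : B3) : (u⁻¹).s = -u.s + u.y * u.z := rfl
@[simp] lemma inv_t (u : B3) :
    (u⁻¹).t = -u.t + u.q * u.z - u.r * u.y + u.s * u.x - 2 * (u.x * u.y * u.z) := rfl

instance : Group B3 :=
  { mul := (· * ·), one := 1, inv := (·⁻¹),
    mul_assoc := by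
      intro u v w
      ext <;> simp <;> try ring
      linear_combination (w.x * v.y * u.z) * three_eq_zero
    one_mul := by intro u; ext <;> simp
    mul_one := by intro u; ext <;> simp
    inv_mul_cancel := by intro u; ext <;> simp <;> ring }

lemma cube_eq_one (u : B3) : u ^ 3 = 1 := by
  rw [pow_succ, pow_succ, pow_one]
  ext <;> simp
  · linear_combination u.x * three_eq_zero
  · linear_combination u.y * three_eq_zero
  · linear_combination u.z * three_eq_zero
  · linear_combination (u.q + u.x * u.y) * three_eq_zero
  · linear_combination (u.r + u.x * u.z) * three_eq_zero
  · linear_combination (u.s + u.y * u.z) * three_eq_zero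
  · linear_combination
      (u.q * u.z - u.r * u.y + u.s * u.x + u.t + 2 * (u.x * u.y * u.z)) * three_eq_zero

/-- The subgroup `{u | u.x = u.y = u.z = 0}` of `B3`. -/
def sgA : Subgroup B3 where
  carrier := {u | u.x = 0 ∧ u.y = 0 ∧ u.z = 0}
  one_mem' := by simp [Set.mem_setOf_eq]
  mul_mem' := by
    rintro u v ⟨h1, h2, h3⟩ ⟨h4, h5, h6⟩
    simp_all [Set.mem_setOf_eq]
  inv_mem' := by
    rintro u ⟨h1, h2, h3⟩
    simp_all [Set.mem_setOf_eq]

/-- The central subgroup (the `t`-axis) of `B3`. -/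
def sgB : Subgroup B3 where
  carrier := {u | u.x = 0 ∧ u.y = 0 ∧ u.z = 0 ∧ u.q = 0 ∧ u.r = 0 ∧ u.s = 0}
  one_mem' := by simp [Set.mem_setOf_eq]
  mul_mem' := by
    rintro u v ⟨h1, h2, h3, h4, h5, h6⟩ ⟨h7, h8, h9, h10, h11, h12⟩
    simp_all [Set.mem_setOf_eq]
  inv_mem' := by
    rintro u ⟨h1, h2, h3, h4, h5, h6⟩
    simp_all [Set.mem_setOf_eq]

lemma lcs_three_eq_bot : (⊤ : Subgroup B3).lowerCentralSeries 3 = ⊥ := by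
  have h1 : (⊤ : Subgroup B3).lowerCentralSeries 1 ≤ sgA := by
    rw [show (1 : ℕ) = 0 + 1 from rfl, lowerCentralSeries_succ]
    rw [Subgroup.commutator_le]
    intro g _ h _
    simp only [commutatorElement_def, sgA, Subgroup.mem_mk, Set.mem_setOf_eq]
    refine ⟨?_, ?_, ?_⟩ <;> simp <;> ring
  have h2 : (⊤ : Subgroup B3).lowerCentralSeries 2 ≤ sgB := by
    rw [show (2 : ℕ) = 1 + 1 from rfl, lowerCentralSeries_succ]
    refine le_trans (Subgroup.commutator_mono h1 le_top) ?_
    rw [Subgroup.commutator_le]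
    intro g hg h _
    obtain ⟨hx, hy, hz⟩ := hg
    simp only [commutatorElement_def, sgB, Subgroup.mem_mk, Set.mem_setOf_eq]
    refine ⟨?_, ?_, ?_, ?_, ?_, ?_⟩ <;> simp [hx, hy, hz] <;> ring
  rw [show (3 : ℕ) = 2 + 1 from rfl, lowerCentralSeries_succ, ← le_bot_iff]
  refine le_trans (Subgroup.commutator_mono h2 le_top) ?_
  rw [Subgroup.commutator_le]
  intro g hg h _
  obtain ⟨hx, hy, hz, hq, hr, hs⟩ := hg
  rw [Subgroup.mem_bot, commutatorElement_eq_one_iff_commute]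
  show g * h = h * g
  ext <;> simp [hx, hy, hz, hq, hr, hs] <;> ring

end B3



/-- The generators `x_1, …, x_6` of the free group `F_6` (`xF6 i` is `x_{i+1}`). -/
def xF6 (i : Fin 6) : FreeGroup (Fin 6) := FreeGroup.of i

/-- `r_6 = (x_1x_2⁻¹x_6x_2⁻¹x_1)⁻¹ · x_4x_3⁻¹x_1x_2⁻¹x_3x_4⁻¹ · x_6 ·
x_4⁻¹x_3x_2⁻¹x_1x_3⁻¹x_4 ∈ F_6`, one of the relators of the associated core group of
the 2-parallel of the Borromean rings. -/
def rBor6 : FreeGroup (Fin 6) :=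
  (xF6 0 * (xF6 1)⁻¹ * xF6 5 * (xF6 1)⁻¹ * xF6 0)⁻¹ *
  (xF6 3 * (xF6 2)⁻¹ * xF6 0 * (xF6 1)⁻¹ * xF6 2 * (xF6 3)⁻¹ *
   xF6 5 *
   (xF6 3)⁻¹ * xF6 2 * (xF6 1)⁻¹ * xF6 0 * (xF6 2)⁻¹ * xF6 3)

/-- If some group `G` of exponent `p` and nilpotency class at most `p` admits a
homomorphism from `F_6` not killing `r_6`, then `r_6 ∉ W̄_p · γ_{p+1} F_6`. -/
lemma not_mem_of_hom {G : Type*} [Group G] (p : ℕ) (φ : FreeGroup (Fin 6) →* G)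
    (hpow : ∀ g : G, g ^ p = 1) (hlcs : (⊤ : Subgroup G).lowerCentralSeries p = ⊥)
    (hr : φ rBor6 ≠ 1) : rBor6 ∉ WbarGamma 6 p (p + 1) := by
  intro hmem
  apply hr
  have hle : WbarGamma 6 p (p + 1) ≤ φ.ker := by
    unfold WbarGamma
    rw [Nat.add_sub_cancel]
    apply sup_le
    · apply Subgroup.normalClosure_le_normal
      rintro w ⟨v, rfl⟩
      simp only [SetLike.mem_coe, MonoidHom.mem_ker, map_pow]
      exact hpow _
    · intro w hw
      have hm : φ w ∈ (⊤ : Subgroup G).lowerCentralSeries p :=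
        lowerCentralSeries.map φ p (Subgroup.mem_map.mpr ⟨w, hw, rfl⟩)
      rw [hlcs, Subgroup.mem_bot] at hm
      simpa [MonoidHom.mem_ker] using hm
  simpa [MonoidHom.mem_ker] using hle hmem

/-- Generators' images in `UTg (ZMod p)`. -/
def gensH (p : ℕ) : Fin 6 → UTg (ZMod p) := fun i =>
  match i with
  | 0 => ⟨1, 0, 0, 0, 0, 0⟩
  | 1 => 1
  | 2 => ⟨0, 0, 0, 1, 0, 0⟩
  | 3 => 1
  | 4 => 1
  | 5 => ⟨0, 0, 0, 0, 0, 1⟩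

/-- Generators' images in `B3`. -/
def gensB : Fin 6 → B3 := fun i =>
  match i with
  | 0 => ⟨1, 0, 0, 0, 0, 0, 0⟩
  | 1 => 1
  | 2 => ⟨0, 1, 0, 0, 0, 0, 0⟩
  | 3 => 1
  | 4 => 1
  | 5 => ⟨0, 0, 1, 0, 0, 0, 0⟩

/-- For every odd prime `p`, the element `r_6 ∈ F_6` does not belong
to the subgroup `W̄_p · γ_{p+1} F_6`. -/
theorem rBor6_not_mem_WbarGamma (p : ℕ) (hp : p.Prime) (hodd : Odd p) :
    rBor6 ∉ WbarGamma 6 p (p + 1) := by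
  by_cases h3 : p = 3
  · subst h3
    refine not_mem_of_hom 3 (FreeGroup.lift gensB) B3.cube_eq_one B3.lcs_three_eq_bot ?_
    intro h
    have g0 : gensB 0 = ⟨1, 0, 0, 0, 0, 0, 0⟩ := rfl
    have g1 : gensB 1 = 1 := rfl
    have g2 : gensB 2 = ⟨0, 1, 0, 0, 0, 0, 0⟩ := rfl
    have g3 : gensB 3 = 1 := rfl
    have g5 : gensB 5 = ⟨0, 0, 1, 0, 0, 0, 0⟩ := rfl
    have hc := congrArg B3.t h
    simp [rBor6, xF6, map_mul, map_inv, FreeGroup.lift_apply_of, g0, g1, g2, g3, g5] at hc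
    exact absurd hc (by decide)
  · have h2 : 2 ≤ p := hp.two_le
    have hmod : p % 2 = 1 := Nat.odd_iff.mp hodd
    have h5 : 5 ≤ p := by omega
    haveI : Fact p.Prime := ⟨hp⟩
    refine not_mem_of_hom p (FreeGroup.lift (gensH p))
      (UTg.pow_prime_eq_one p hp h5) ?_ ?_
    · rw [← le_bot_iff, ← UTg.lcs_three_eq_bot (R := ZMod p)]
      exact lowerCentralSeries_antitone _ (by omega)
    · intro h
      have hc := congrArg UTg.c h
      simp [rBor6, xF6, map_mul, map_inv, FreeGroup.lift_apply_of, gensH] at hc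
end

section
/- Let p be an odd prime. In the truncated algebra A_4 over ℤ/pℤ on X_1, …, X_4, the degree-3 component of E^p(r_b) has coefficient 1 on the monomial X_4X_2X_3 and coefficient 0 on the monomial X_4X_3X_2. -/
/-- The generators `x_1, …, x_4` of the free group `F_4` (`xF4 i` is `x_{i+1}`). -/
def xF4 (i : Fin 4) : FreeGroup (Fin 4) := FreeGroup.of i

/-- `Q_3 = x_4x_1⁻¹x_2x_4⁻¹x_1x_2⁻¹ · x_3 · x_2⁻¹x_1x_4⁻¹x_2x_1⁻¹x_4 ∈ F_4`. -/
def QWelded : FreeGroup (Fin 4) :=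
  xF4 3 * (xF4 0)⁻¹ * xF4 1 * (xF4 3)⁻¹ * xF4 0 * (xF4 1)⁻¹ *
  xF4 2 *
  (xF4 1)⁻¹ * xF4 0 * (xF4 3)⁻¹ * xF4 1 * (xF4 0)⁻¹ * xF4 3

/-- `r_b = Q_3 x_3⁻¹ ∈ F_4`, the relator of the associated core group of the closure
of the welded 4-braid `b`. -/
def rWelded : FreeGroup (Fin 4) := QWelded * (xF4 2)⁻¹

def mg (p : ℕ) (w : Fin 3 → Fin 4) (i : Fin 4) : Matrix (Fin 4) (Fin 4) (ZMod p) :=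
  Matrix.of ![![0, if w 0 = i then 1 else 0, 0, 0],
              ![0, 0, if w 1 = i then 1 else 0, 0],
              ![0, 0, 0, if w 2 = i then 1 else 0],
              ![0, 0, 0, 0]]

noncomputable def MAlg (p : ℕ) (w : Fin 3 → Fin 4) :
    FreeAlgebra (ZMod p) (Fin 4) →ₐ[ZMod p] Matrix (Fin 4) (Fin 4) (ZMod p) :=
  FreeAlgebra.lift (ZMod p) (mg p w)

lemma mg_mul (p : ℕ) (w : Fin 3 → Fin 4) (a b : Fin 4) :
    mg p w a * mg p w b =
      Matrix.of ![![0, 0, (if w 0 = a then 1 else 0) * (if w 1 = b then 1 else 0), 0],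
                  ![0, 0, 0, (if w 1 = a then 1 else 0) * (if w 2 = b then 1 else 0)],
                  ![0, 0, 0, 0], ![0, 0, 0, 0]] := by
  ext i j
  fin_cases i <;> fin_cases j <;>
    simp [mg, Matrix.mul_apply, Fin.sum_univ_four, Matrix.vecHead, Matrix.vecTail]

lemma shape_mul (p : ℕ) (x y z v : ZMod p) :
    (Matrix.of ![![0, 0, x, 0], ![0, 0, 0, y], ![0, 0, 0, 0], ![(0:ZMod p), 0, 0, 0]]) *
    (Matrix.of ![![0, 0, z, 0], ![0, 0, 0, v], ![0, 0, 0, 0], ![(0:ZMod p), 0, 0, 0]]) = 0 := by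
  ext i j
  fin_cases i <;> fin_cases j <;>
    simp [Matrix.mul_apply, Fin.sum_univ_four, Matrix.vecHead, Matrix.vecTail]

lemma mg_four (p : ℕ) (w : Fin 3 → Fin 4) (a b c d : Fin 4) :
    mg p w a * (mg p w b * (mg p w c * mg p w d)) = 0 := by
  rw [← mul_assoc, mg_mul, mg_mul, shape_mul]

lemma MAlg_monomial (p : ℕ) (w : Fin 3 → Fin 4) (u : List (Fin 4)) :
    MAlg p w (magnusMonomial p 4 u) = (u.map (mg p w)).prod := by
  rw [magnusMonomial, map_list_prod, List.map_map]
  congr 1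
  ext x
  simp [MAlg, Function.comp]

lemma MAlg_rel (p : ℕ) (w : Fin 3 → Fin 4) :
    ∀ ⦃x y⦄, truncRel p 4 4 x y → (MAlg p w).toRingHom x = (MAlg p w).toRingHom y := by
  rintro x y ⟨u, hlen, rfl, rfl⟩
  match u, hlen with
  | [a, b, c, d], _ =>
    simp only [AlgHom.toRingHom_eq_coe, RingHom.coe_coe, map_zero, MAlg_monomial]
    simp [mg_four, mul_assoc]


set_option maxHeartbeats 1000000 in
lemma QM_entries (p : ℕ) (w : Fin 3 → Fin 4) (u : List (Fin 4)) :
    (u.map (mg p w)).prod 3 3 = (if u = [] then 1 else 0) ∧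
    (u.map (mg p w)).prod 2 3 = (if u = [w 2] then 1 else 0) ∧
    (u.map (mg p w)).prod 1 3 = (if u = [w 1, w 2] then 1 else 0) ∧
    (u.map (mg p w)).prod 0 3 = (if u = [w 0, w 1, w 2] then 1 else 0) := by
  induction u with
  | nil => simp [Matrix.one_apply]
  | cons i u ih =>
    obtain ⟨h3, h2, h1, h0⟩ := ih
    rw [List.map_cons, List.prod_cons]
    refine ⟨?_, ?_, ?_, ?_⟩ <;>
      rw [Matrix.mul_apply, Fin.sum_univ_four] <;>
      simp only [mg, Matrix.of_apply, Matrix.cons_val_zero, Matrix.cons_val_one,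
        Matrix.head_cons, Matrix.cons_val_two, Matrix.tail_cons, Matrix.cons_val_three,
        Matrix.vecHead, Matrix.vecTail, Function.comp_apply,
        h0, h1, h2, h3] <;>
      simp only [mul_zero, zero_mul, add_zero, zero_add, mul_ite, ite_mul,
        mul_one, one_mul] <;>
      split_ifs <;> simp_all [Matrix.vecHead, Matrix.vecTail]

lemma ofList_eq_iff (v : List (Fin 4)) (a : FreeMonoid (Fin 4)) :
    a = FreeMonoid.ofList v ↔ FreeMonoid.toList a = v := by
  constructor
  · rintro rfl; rfl
  · intro h; rw [← FreeMonoid.ofList_toList a, h]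

lemma coeff_eq_entry (p : ℕ) (w : Fin 3 → Fin 4) (t : FreeAlgebra (ZMod p) (Fin 4)) :
    magnusCoeff p 4 [w 0, w 1, w 2] t = MAlg p w t 0 3 := by
  classical
  have key : ∀ f : MonoidAlgebra (ZMod p) (FreeMonoid (Fin 4)),
      f.coeff (FreeMonoid.ofList [w 0, w 1, w 2]) =
        MAlg p w (FreeAlgebra.equivMonoidAlgebraFreeMonoid.symm f) 0 3 := by
    have hsymm : ∀ (a : FreeMonoid (Fin 4)) (b : ZMod p),
        (FreeAlgebra.equivMonoidAlgebraFreeMonoid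
            (R := ZMod p) (X := Fin 4)).symm (MonoidAlgebra.single a b) =
          b • magnusMonomial p 4 (FreeMonoid.toList a) := by
      intro a b
      have : (FreeAlgebra.equivMonoidAlgebraFreeMonoid
            (R := ZMod p) (X := Fin 4)).symm (MonoidAlgebra.single a b) =
          (MonoidAlgebra.lift (ZMod p) (FreeAlgebra (ZMod p) (Fin 4)) (FreeMonoid (Fin 4)))
            (FreeMonoid.lift (FreeAlgebra.ι (ZMod p))) (MonoidAlgebra.single a b) := rfl
      rw [this, MonoidAlgebra.lift_single]
      congr 1
      rw [FreeMonoid.lift_apply]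
      rfl
    let L1 : MonoidAlgebra (ZMod p) (FreeMonoid (Fin 4)) →+ ZMod p :=
      (Finsupp.applyAddHom (FreeMonoid.ofList [w 0, w 1, w 2])).comp
        MonoidAlgebra.coeffAddEquiv.toAddMonoidHom
    let L2 : MonoidAlgebra (ZMod p) (FreeMonoid (Fin 4)) →+ ZMod p :=
      AddMonoidHom.mk' (fun f => MAlg p w (FreeAlgebra.equivMonoidAlgebraFreeMonoid.symm f) 0 3)
        (by intro f g; simp [map_add, Matrix.add_apply])
    have hLL : L1 = L2 := by
      apply MonoidAlgebra.addMonoidHom_ext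
      intro a b
      show (MonoidAlgebra.single a b).coeff (FreeMonoid.ofList [w 0, w 1, w 2]) =
        MAlg p w (FreeAlgebra.equivMonoidAlgebraFreeMonoid.symm (MonoidAlgebra.single a b)) 0 3
      rw [hsymm, map_smul, MonoidAlgebra.coeff_single, Finsupp.single_apply, Matrix.smul_apply, MAlg_monomial,
        (QM_entries p w (FreeMonoid.toList a)).2.2.2, smul_eq_mul]
      by_cases h : FreeMonoid.toList a = [w 0, w 1, w 2]
      · rw [if_pos ((ofList_eq_iff _ a).mpr h), if_pos h, mul_one]
      · rw [if_neg (fun hh => h ((ofList_eq_iff _ a).mp hh)), if_neg h, mul_zero]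
    intro f
    exact DFunLike.congr_fun hLL f
  have := key (FreeAlgebra.equivMonoidAlgebraFreeMonoid t)
  rwa [AlgEquiv.symm_apply_apply] at this


lemma mg_sq (p : ℕ) (w : Fin 3 → Fin 4) (h01 : w 0 ≠ w 1) (h12 : w 1 ≠ w 2) (i : Fin 4) :
    mg p w i * mg p w i = 0 := by
  rw [mg_mul]
  ext a b
  fin_cases a <;> fin_cases b <;>
    simp [Matrix.vecHead, Matrix.vecTail] <;>
    (try (rintro rfl h; exact absurd h (by assumption)))

def Umat (p : ℕ) (w : Fin 3 → Fin 4) (h01 : w 0 ≠ w 1) (h12 : w 1 ≠ w 2) (i : Fin 4) :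
    (Matrix (Fin 4) (Fin 4) (ZMod p))ˣ :=
  ⟨1 + mg p w i, 1 - mg p w i,
    by rw [mul_sub, mul_one, add_mul, one_mul, mg_sq p w h01 h12 i]; simp,
    by rw [sub_mul, one_mul, mul_add, mul_one, mg_sq p w h01 h12 i]; simp⟩

lemma Umat_val (p : ℕ) (w : Fin 3 → Fin 4) (h01 : w 0 ≠ w 1) (h12 : w 1 ≠ w 2) (i : Fin 4) :
    ((Umat p w h01 h12 i : (Matrix (Fin 4) (Fin 4) (ZMod p))ˣ) : Matrix (Fin 4) (Fin 4) (ZMod p))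
      = 1 + mg p w i := rfl

lemma Umat_inv_val (p : ℕ) (w : Fin 3 → Fin 4) (h01 : w 0 ≠ w 1) (h12 : w 1 ≠ w 2) (i : Fin 4) :
    (((Umat p w h01 h12 i)⁻¹ :
        (Matrix (Fin 4) (Fin 4) (ZMod p))ˣ) : Matrix (Fin 4) (Fin 4) (ZMod p))
      = 1 - mg p w i := rfl

lemma MAlg_t (p : ℕ) (w : Fin 3 → Fin 4) (h01 : w 0 ≠ w 1) (h12 : w 1 ≠ w 2)
    (t : FreeAlgebra (ZMod p) (Fin 4))
    (ht : truncMk p 4 4 t = ↑(magnus p 4 4 rWelded)) :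
    MAlg p w t =
      (1 + mg p w 3) * (1 - mg p w 0) * (1 + mg p w 1) * (1 - mg p w 3) * (1 + mg p w 0) *
      (1 - mg p w 1) * (1 + mg p w 2) * (1 - mg p w 1) * (1 + mg p w 0) * (1 - mg p w 3) *
      (1 + mg p w 1) * (1 - mg p w 0) * (1 + mg p w 3) * (1 - mg p w 2) := by
  set Mq : TruncAlgebra p 4 4 →+* Matrix (Fin 4) (Fin 4) (ZMod p) :=
    RingQuot.lift ⟨(MAlg p w).toRingHom, MAlg_rel p w⟩ with hMqdef
  have hMq : ∀ x, Mq (truncMk p 4 4 x) = MAlg p w x := fun x =>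
    RingQuot.lift_mkRingHom_apply _ (MAlg_rel p w) x
  set F : FreeGroup (Fin 4) →* (Matrix (Fin 4) (Fin 4) (ZMod p))ˣ :=
    (Units.map Mq.toMonoidHom).comp (magnus p 4 4) with hFdef
  have hF : ∀ i : Fin 4, F (xF4 i) = Umat p w h01 h12 i := by
    intro i
    apply Units.ext
    show Mq ↑(magnus p 4 4 (xF4 i)) = 1 + mg p w i
    rw [xF4, magnus, FreeGroup.lift_apply_of, IsUnit.unit_spec, map_add, map_one, hMq]
    congr 1
    exact FreeAlgebra.lift_ι_apply _ _
  have hFr : F rWelded =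
      Umat p w h01 h12 3 * (Umat p w h01 h12 0)⁻¹ * Umat p w h01 h12 1 *
      (Umat p w h01 h12 3)⁻¹ * Umat p w h01 h12 0 * (Umat p w h01 h12 1)⁻¹ *
      Umat p w h01 h12 2 * (Umat p w h01 h12 1)⁻¹ * Umat p w h01 h12 0 *
      (Umat p w h01 h12 3)⁻¹ * Umat p w h01 h12 1 * (Umat p w h01 h12 0)⁻¹ *
      Umat p w h01 h12 3 * (Umat p w h01 h12 2)⁻¹ := by
    rw [rWelded, QWelded]
    simp only [map_mul, map_inv, hF]
  have hcoe : MAlg p w t = ↑(F rWelded) := by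
    rw [← hMq t, ht, hFdef]
    rfl
  rw [hcoe, hFr]
  simp only [Units.val_mul, Umat_val, Umat_inv_val]
lemma facAp3 (p : ℕ) : (1 : Matrix (Fin 4) (Fin 4) (ZMod p)) + mg p ![3,1,2] 3 = !![1, 1, 0, 0; 0, 1, 0, 0; 0, 0, 1, 0; 0, 0, 0, 1] := by
  ext a b
  fin_cases a <;> fin_cases b <;>
    simp [mg, Matrix.one_apply, Matrix.vecHead, Matrix.vecTail]

lemma facAm0 (p : ℕ) : (1 : Matrix (Fin 4) (Fin 4) (ZMod p)) - mg p ![3,1,2] 0 = !![1, 0, 0, 0; 0, 1, 0, 0; 0, 0, 1, 0; 0, 0, 0, 1] := by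
  ext a b
  fin_cases a <;> fin_cases b <;>
    simp [mg, Matrix.one_apply, Matrix.vecHead, Matrix.vecTail]

lemma facAp1 (p : ℕ) : (1 : Matrix (Fin 4) (Fin 4) (ZMod p)) + mg p ![3,1,2] 1 = !![1, 0, 0, 0; 0, 1, 1, 0; 0, 0, 1, 0; 0, 0, 0, 1] := by
  ext a b
  fin_cases a <;> fin_cases b <;>
    simp [mg, Matrix.one_apply, Matrix.vecHead, Matrix.vecTail]

lemma facAm3 (p : ℕ) : (1 : Matrix (Fin 4) (Fin 4) (ZMod p)) - mg p ![3,1,2] 3 = !![1, -1, 0, 0; 0, 1, 0, 0; 0, 0, 1, 0; 0, 0, 0, 1] := by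
  ext a b
  fin_cases a <;> fin_cases b <;>
    simp [mg, Matrix.one_apply, Matrix.vecHead, Matrix.vecTail]

lemma facAp0 (p : ℕ) : (1 : Matrix (Fin 4) (Fin 4) (ZMod p)) + mg p ![3,1,2] 0 = !![1, 0, 0, 0; 0, 1, 0, 0; 0, 0, 1, 0; 0, 0, 0, 1] := by
  ext a b
  fin_cases a <;> fin_cases b <;>
    simp [mg, Matrix.one_apply, Matrix.vecHead, Matrix.vecTail]

lemma facAm1 (p : ℕ) : (1 : Matrix (Fin 4) (Fin 4) (ZMod p)) - mg p ![3,1,2] 1 = !![1, 0, 0, 0; 0, 1, -1, 0; 0, 0, 1, 0; 0, 0, 0, 1] := by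
  ext a b
  fin_cases a <;> fin_cases b <;>
    simp [mg, Matrix.one_apply, Matrix.vecHead, Matrix.vecTail]

lemma facAp2 (p : ℕ) : (1 : Matrix (Fin 4) (Fin 4) (ZMod p)) + mg p ![3,1,2] 2 = !![1, 0, 0, 0; 0, 1, 0, 0; 0, 0, 1, 1; 0, 0, 0, 1] := by
  ext a b
  fin_cases a <;> fin_cases b <;>
    simp [mg, Matrix.one_apply, Matrix.vecHead, Matrix.vecTail]

lemma facAm2 (p : ℕ) : (1 : Matrix (Fin 4) (Fin 4) (ZMod p)) - mg p ![3,1,2] 2 = !![1, 0, 0, 0; 0, 1, 0, 0; 0, 0, 1, -1; 0, 0, 0, 1] := by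
  ext a b
  fin_cases a <;> fin_cases b <;>
    simp [mg, Matrix.one_apply, Matrix.vecHead, Matrix.vecTail]

lemma stepA2 (p : ℕ) : (!![1, 1, 0, 0; 0, 1, 0, 0; 0, 0, 1, 0; 0, 0, 0, 1] : Matrix (Fin 4) (Fin 4) (ZMod p)) * !![1, 0, 0, 0; 0, 1, 0, 0; 0, 0, 1, 0; 0, 0, 0, 1] = !![1, 1, 0, 0; 0, 1, 0, 0; 0, 0, 1, 0; 0, 0, 0, 1] := by
  ext a b
  fin_cases a <;> fin_cases b <;>
    simp [Matrix.mul_apply, Fin.sum_univ_four, Matrix.vecHead, Matrix.vecTail] <;>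
    (try ring)

lemma stepA3 (p : ℕ) : (!![1, 1, 0, 0; 0, 1, 0, 0; 0, 0, 1, 0; 0, 0, 0, 1] : Matrix (Fin 4) (Fin 4) (ZMod p)) * !![1, 0, 0, 0; 0, 1, 1, 0; 0, 0, 1, 0; 0, 0, 0, 1] = !![1, 1, 1, 0; 0, 1, 1, 0; 0, 0, 1, 0; 0, 0, 0, 1] := by
  ext a b
  fin_cases a <;> fin_cases b <;>
    simp [Matrix.mul_apply, Fin.sum_univ_four, Matrix.vecHead, Matrix.vecTail] <;>
    (try ring)

lemma stepA4 (p : ℕ) : (!![1, 1, 1, 0; 0, 1, 1, 0; 0, 0, 1, 0; 0, 0, 0, 1] : Matrix (Fin 4) (Fin 4) (ZMod p)) * !![1, -1, 0, 0; 0, 1, 0, 0; 0, 0, 1, 0; 0, 0, 0, 1] = !![1, 0, 1, 0; 0, 1, 1, 0; 0, 0, 1, 0; 0, 0, 0, 1] := by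
  ext a b
  fin_cases a <;> fin_cases b <;>
    simp [Matrix.mul_apply, Fin.sum_univ_four, Matrix.vecHead, Matrix.vecTail] <;>
    (try ring)

lemma stepA5 (p : ℕ) : (!![1, 0, 1, 0; 0, 1, 1, 0; 0, 0, 1, 0; 0, 0, 0, 1] : Matrix (Fin 4) (Fin 4) (ZMod p)) * !![1, 0, 0, 0; 0, 1, 0, 0; 0, 0, 1, 0; 0, 0, 0, 1] = !![1, 0, 1, 0; 0, 1, 1, 0; 0, 0, 1, 0; 0, 0, 0, 1] := by
  ext a b
  fin_cases a <;> fin_cases b <;>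
    simp [Matrix.mul_apply, Fin.sum_univ_four, Matrix.vecHead, Matrix.vecTail] <;>
    (try ring)

lemma stepA6 (p : ℕ) : (!![1, 0, 1, 0; 0, 1, 1, 0; 0, 0, 1, 0; 0, 0, 0, 1] : Matrix (Fin 4) (Fin 4) (ZMod p)) * !![1, 0, 0, 0; 0, 1, -1, 0; 0, 0, 1, 0; 0, 0, 0, 1] = !![1, 0, 1, 0; 0, 1, 0, 0; 0, 0, 1, 0; 0, 0, 0, 1] := by
  ext a b
  fin_cases a <;> fin_cases b <;>
    simp [Matrix.mul_apply, Fin.sum_univ_four, Matrix.vecHead, Matrix.vecTail] <;>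
    (try ring)

lemma stepA7 (p : ℕ) : (!![1, 0, 1, 0; 0, 1, 0, 0; 0, 0, 1, 0; 0, 0, 0, 1] : Matrix (Fin 4) (Fin 4) (ZMod p)) * !![1, 0, 0, 0; 0, 1, 0, 0; 0, 0, 1, 1; 0, 0, 0, 1] = !![1, 0, 1, 1; 0, 1, 0, 0; 0, 0, 1, 1; 0, 0, 0, 1] := by
  ext a b
  fin_cases a <;> fin_cases b <;>
    simp [Matrix.mul_apply, Fin.sum_univ_four, Matrix.vecHead, Matrix.vecTail] <;>
    (try ring)

lemma stepA8 (p : ℕ) : (!![1, 0, 1, 1; 0, 1, 0, 0; 0, 0, 1, 1; 0, 0, 0, 1] : Matrix (Fin 4) (Fin 4) (ZMod p)) * !![1, 0, 0, 0; 0, 1, -1, 0; 0, 0, 1, 0; 0, 0, 0, 1] = !![1, 0, 1, 1; 0, 1, -1, 0; 0, 0, 1, 1; 0, 0, 0, 1] := by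
  ext a b
  fin_cases a <;> fin_cases b <;>
    simp [Matrix.mul_apply, Fin.sum_univ_four, Matrix.vecHead, Matrix.vecTail] <;>
    (try ring)

lemma stepA9 (p : ℕ) : (!![1, 0, 1, 1; 0, 1, -1, 0; 0, 0, 1, 1; 0, 0, 0, 1] : Matrix (Fin 4) (Fin 4) (ZMod p)) * !![1, 0, 0, 0; 0, 1, 0, 0; 0, 0, 1, 0; 0, 0, 0, 1] = !![1, 0, 1, 1; 0, 1, -1, 0; 0, 0, 1, 1; 0, 0, 0, 1] := by
  ext a b
  fin_cases a <;> fin_cases b <;>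
    simp [Matrix.mul_apply, Fin.sum_univ_four, Matrix.vecHead, Matrix.vecTail] <;>
    (try ring)

lemma stepA10 (p : ℕ) : (!![1, 0, 1, 1; 0, 1, -1, 0; 0, 0, 1, 1; 0, 0, 0, 1] : Matrix (Fin 4) (Fin 4) (ZMod p)) * !![1, -1, 0, 0; 0, 1, 0, 0; 0, 0, 1, 0; 0, 0, 0, 1] = !![1, -1, 1, 1; 0, 1, -1, 0; 0, 0, 1, 1; 0, 0, 0, 1] := by
  ext a b
  fin_cases a <;> fin_cases b <;>
    simp [Matrix.mul_apply, Fin.sum_univ_four, Matrix.vecHead, Matrix.vecTail] <;>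
    (try ring)

lemma stepA11 (p : ℕ) : (!![1, -1, 1, 1; 0, 1, -1, 0; 0, 0, 1, 1; 0, 0, 0, 1] : Matrix (Fin 4) (Fin 4) (ZMod p)) * !![1, 0, 0, 0; 0, 1, 1, 0; 0, 0, 1, 0; 0, 0, 0, 1] = !![1, -1, 0, 1; 0, 1, 0, 0; 0, 0, 1, 1; 0, 0, 0, 1] := by
  ext a b
  fin_cases a <;> fin_cases b <;>
    simp [Matrix.mul_apply, Fin.sum_univ_four, Matrix.vecHead, Matrix.vecTail] <;>
    (try ring)

lemma stepA12 (p : ℕ) : (!![1, -1, 0, 1; 0, 1, 0, 0; 0, 0, 1, 1; 0, 0, 0, 1] : Matrix (Fin 4) (Fin 4) (ZMod p)) * !![1, 0, 0, 0; 0, 1, 0, 0; 0, 0, 1, 0; 0, 0, 0, 1] = !![1, -1, 0, 1; 0, 1, 0, 0; 0, 0, 1, 1; 0, 0, 0, 1] := by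
  ext a b
  fin_cases a <;> fin_cases b <;>
    simp [Matrix.mul_apply, Fin.sum_univ_four, Matrix.vecHead, Matrix.vecTail] <;>
    (try ring)

lemma stepA13 (p : ℕ) : (!![1, -1, 0, 1; 0, 1, 0, 0; 0, 0, 1, 1; 0, 0, 0, 1] : Matrix (Fin 4) (Fin 4) (ZMod p)) * !![1, 1, 0, 0; 0, 1, 0, 0; 0, 0, 1, 0; 0, 0, 0, 1] = !![1, 0, 0, 1; 0, 1, 0, 0; 0, 0, 1, 1; 0, 0, 0, 1] := by
  ext a b
  fin_cases a <;> fin_cases b <;>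
    simp [Matrix.mul_apply, Fin.sum_univ_four, Matrix.vecHead, Matrix.vecTail] <;>
    (try ring)

lemma stepA14 (p : ℕ) : (!![1, 0, 0, 1; 0, 1, 0, 0; 0, 0, 1, 1; 0, 0, 0, 1] : Matrix (Fin 4) (Fin 4) (ZMod p)) * !![1, 0, 0, 0; 0, 1, 0, 0; 0, 0, 1, -1; 0, 0, 0, 1] = !![1, 0, 0, 1; 0, 1, 0, 0; 0, 0, 1, 0; 0, 0, 0, 1] := by
  ext a b
  fin_cases a <;> fin_cases b <;>
    simp [Matrix.mul_apply, Fin.sum_univ_four, Matrix.vecHead, Matrix.vecTail] <;>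
    (try ring)

lemma bigProdA (p : ℕ) :
    (1 + mg p ![3,1,2] 3) *
      (1 - mg p ![3,1,2] 0) *
      (1 + mg p ![3,1,2] 1) *
      (1 - mg p ![3,1,2] 3) *
      (1 + mg p ![3,1,2] 0) *
      (1 - mg p ![3,1,2] 1) *
      (1 + mg p ![3,1,2] 2) *
      (1 - mg p ![3,1,2] 1) *
      (1 + mg p ![3,1,2] 0) *
      (1 - mg p ![3,1,2] 3) *
      (1 + mg p ![3,1,2] 1) *
      (1 - mg p ![3,1,2] 0) *
      (1 + mg p ![3,1,2] 3) *
      (1 - mg p ![3,1,2] 2) = (!![1, 0, 0, 1; 0, 1, 0, 0; 0, 0, 1, 0; 0, 0, 0, 1] : Matrix (Fin 4) (Fin 4) (ZMod p)) := by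
  rw [facAp3, facAm0, facAp1, facAm3, facAp0, facAm1, facAp2, facAm2, stepA2, stepA3, stepA4, stepA5, stepA6, stepA7, stepA8, stepA9, stepA10, stepA11, stepA12, stepA13, stepA14]

lemma facBp3 (p : ℕ) : (1 : Matrix (Fin 4) (Fin 4) (ZMod p)) + mg p ![3,2,1] 3 = !![1, 1, 0, 0; 0, 1, 0, 0; 0, 0, 1, 0; 0, 0, 0, 1] := by
  ext a b
  fin_cases a <;> fin_cases b <;>
    simp [mg, Matrix.one_apply, Matrix.vecHead, Matrix.vecTail]

lemma facBm0 (p : ℕ) : (1 : Matrix (Fin 4) (Fin 4) (ZMod p)) - mg p ![3,2,1] 0 = !![1, 0, 0, 0; 0, 1, 0, 0; 0, 0, 1, 0; 0, 0, 0, 1] := by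
  ext a b
  fin_cases a <;> fin_cases b <;>
    simp [mg, Matrix.one_apply, Matrix.vecHead, Matrix.vecTail]

lemma facBp1 (p : ℕ) : (1 : Matrix (Fin 4) (Fin 4) (ZMod p)) + mg p ![3,2,1] 1 = !![1, 0, 0, 0; 0, 1, 0, 0; 0, 0, 1, 1; 0, 0, 0, 1] := by
  ext a b
  fin_cases a <;> fin_cases b <;>
    simp [mg, Matrix.one_apply, Matrix.vecHead, Matrix.vecTail]

lemma facBm3 (p : ℕ) : (1 : Matrix (Fin 4) (Fin 4) (ZMod p)) - mg p ![3,2,1] 3 = !![1, -1, 0, 0; 0, 1, 0, 0; 0, 0, 1, 0; 0, 0, 0, 1] := by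
  ext a b
  fin_cases a <;> fin_cases b <;>
    simp [mg, Matrix.one_apply, Matrix.vecHead, Matrix.vecTail]

lemma facBp0 (p : ℕ) : (1 : Matrix (Fin 4) (Fin 4) (ZMod p)) + mg p ![3,2,1] 0 = !![1, 0, 0, 0; 0, 1, 0, 0; 0, 0, 1, 0; 0, 0, 0, 1] := by
  ext a b
  fin_cases a <;> fin_cases b <;>
    simp [mg, Matrix.one_apply, Matrix.vecHead, Matrix.vecTail]

lemma facBm1 (p : ℕ) : (1 : Matrix (Fin 4) (Fin 4) (ZMod p)) - mg p ![3,2,1] 1 = !![1, 0, 0, 0; 0, 1, 0, 0; 0, 0, 1, -1; 0, 0, 0, 1] := by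
  ext a b
  fin_cases a <;> fin_cases b <;>
    simp [mg, Matrix.one_apply, Matrix.vecHead, Matrix.vecTail]

lemma facBp2 (p : ℕ) : (1 : Matrix (Fin 4) (Fin 4) (ZMod p)) + mg p ![3,2,1] 2 = !![1, 0, 0, 0; 0, 1, 1, 0; 0, 0, 1, 0; 0, 0, 0, 1] := by
  ext a b
  fin_cases a <;> fin_cases b <;>
    simp [mg, Matrix.one_apply, Matrix.vecHead, Matrix.vecTail]

lemma facBm2 (p : ℕ) : (1 : Matrix (Fin 4) (Fin 4) (ZMod p)) - mg p ![3,2,1] 2 = !![1, 0, 0, 0; 0, 1, -1, 0; 0, 0, 1, 0; 0, 0, 0, 1] := by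
  ext a b
  fin_cases a <;> fin_cases b <;>
    simp [mg, Matrix.one_apply, Matrix.vecHead, Matrix.vecTail]

lemma stepB2 (p : ℕ) : (!![1, 1, 0, 0; 0, 1, 0, 0; 0, 0, 1, 0; 0, 0, 0, 1] : Matrix (Fin 4) (Fin 4) (ZMod p)) * !![1, 0, 0, 0; 0, 1, 0, 0; 0, 0, 1, 0; 0, 0, 0, 1] = !![1, 1, 0, 0; 0, 1, 0, 0; 0, 0, 1, 0; 0, 0, 0, 1] := by
  ext a b
  fin_cases a <;> fin_cases b <;>
    simp [Matrix.mul_apply, Fin.sum_univ_four, Matrix.vecHead, Matrix.vecTail] <;>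
    (try ring)

lemma stepB3 (p : ℕ) : (!![1, 1, 0, 0; 0, 1, 0, 0; 0, 0, 1, 0; 0, 0, 0, 1] : Matrix (Fin 4) (Fin 4) (ZMod p)) * !![1, 0, 0, 0; 0, 1, 0, 0; 0, 0, 1, 1; 0, 0, 0, 1] = !![1, 1, 0, 0; 0, 1, 0, 0; 0, 0, 1, 1; 0, 0, 0, 1] := by
  ext a b
  fin_cases a <;> fin_cases b <;>
    simp [Matrix.mul_apply, Fin.sum_univ_four, Matrix.vecHead, Matrix.vecTail] <;>
    (try ring)

lemma stepB4 (p : ℕ) : (!![1, 1, 0, 0; 0, 1, 0, 0; 0, 0, 1, 1; 0, 0, 0, 1] : Matrix (Fin 4) (Fin 4) (ZMod p)) * !![1, -1, 0, 0; 0, 1, 0, 0; 0, 0, 1, 0; 0, 0, 0, 1] = !![1, 0, 0, 0; 0, 1, 0, 0; 0, 0, 1, 1; 0, 0, 0, 1] := by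
  ext a b
  fin_cases a <;> fin_cases b <;>
    simp [Matrix.mul_apply, Fin.sum_univ_four, Matrix.vecHead, Matrix.vecTail] <;>
    (try ring)

lemma stepB5 (p : ℕ) : (!![1, 0, 0, 0; 0, 1, 0, 0; 0, 0, 1, 1; 0, 0, 0, 1] : Matrix (Fin 4) (Fin 4) (ZMod p)) * !![1, 0, 0, 0; 0, 1, 0, 0; 0, 0, 1, 0; 0, 0, 0, 1] = !![1, 0, 0, 0; 0, 1, 0, 0; 0, 0, 1, 1; 0, 0, 0, 1] := by
  ext a b
  fin_cases a <;> fin_cases b <;>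
    simp [Matrix.mul_apply, Fin.sum_univ_four, Matrix.vecHead, Matrix.vecTail] <;>
    (try ring)

lemma stepB6 (p : ℕ) : (!![1, 0, 0, 0; 0, 1, 0, 0; 0, 0, 1, 1; 0, 0, 0, 1] : Matrix (Fin 4) (Fin 4) (ZMod p)) * !![1, 0, 0, 0; 0, 1, 0, 0; 0, 0, 1, -1; 0, 0, 0, 1] = !![1, 0, 0, 0; 0, 1, 0, 0; 0, 0, 1, 0; 0, 0, 0, 1] := by
  ext a b
  fin_cases a <;> fin_cases b <;>
    simp [Matrix.mul_apply, Fin.sum_univ_four, Matrix.vecHead, Matrix.vecTail] <;>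
    (try ring)

lemma stepB7 (p : ℕ) : (!![1, 0, 0, 0; 0, 1, 0, 0; 0, 0, 1, 0; 0, 0, 0, 1] : Matrix (Fin 4) (Fin 4) (ZMod p)) * !![1, 0, 0, 0; 0, 1, 1, 0; 0, 0, 1, 0; 0, 0, 0, 1] = !![1, 0, 0, 0; 0, 1, 1, 0; 0, 0, 1, 0; 0, 0, 0, 1] := by
  ext a b
  fin_cases a <;> fin_cases b <;>
    simp [Matrix.mul_apply, Fin.sum_univ_four, Matrix.vecHead, Matrix.vecTail] <;>
    (try ring)

lemma stepB8 (p : ℕ) : (!![1, 0, 0, 0; 0, 1, 1, 0; 0, 0, 1, 0; 0, 0, 0, 1] : Matrix (Fin 4) (Fin 4) (ZMod p)) * !![1, 0, 0, 0; 0, 1, 0, 0; 0, 0, 1, -1; 0, 0, 0, 1] = !![1, 0, 0, 0; 0, 1, 1, -1; 0, 0, 1, -1; 0, 0, 0, 1] := by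
  ext a b
  fin_cases a <;> fin_cases b <;>
    simp [Matrix.mul_apply, Fin.sum_univ_four, Matrix.vecHead, Matrix.vecTail] <;>
    (try ring)

lemma stepB9 (p : ℕ) : (!![1, 0, 0, 0; 0, 1, 1, -1; 0, 0, 1, -1; 0, 0, 0, 1] : Matrix (Fin 4) (Fin 4) (ZMod p)) * !![1, 0, 0, 0; 0, 1, 0, 0; 0, 0, 1, 0; 0, 0, 0, 1] = !![1, 0, 0, 0; 0, 1, 1, -1; 0, 0, 1, -1; 0, 0, 0, 1] := by
  ext a b
  fin_cases a <;> fin_cases b <;>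
    simp [Matrix.mul_apply, Fin.sum_univ_four, Matrix.vecHead, Matrix.vecTail] <;>
    (try ring)

lemma stepB10 (p : ℕ) : (!![1, 0, 0, 0; 0, 1, 1, -1; 0, 0, 1, -1; 0, 0, 0, 1] : Matrix (Fin 4) (Fin 4) (ZMod p)) * !![1, -1, 0, 0; 0, 1, 0, 0; 0, 0, 1, 0; 0, 0, 0, 1] = !![1, -1, 0, 0; 0, 1, 1, -1; 0, 0, 1, -1; 0, 0, 0, 1] := by
  ext a b
  fin_cases a <;> fin_cases b <;>
    simp [Matrix.mul_apply, Fin.sum_univ_four, Matrix.vecHead, Matrix.vecTail] <;>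
    (try ring)

lemma stepB11 (p : ℕ) : (!![1, -1, 0, 0; 0, 1, 1, -1; 0, 0, 1, -1; 0, 0, 0, 1] : Matrix (Fin 4) (Fin 4) (ZMod p)) * !![1, 0, 0, 0; 0, 1, 0, 0; 0, 0, 1, 1; 0, 0, 0, 1] = !![1, -1, 0, 0; 0, 1, 1, 0; 0, 0, 1, 0; 0, 0, 0, 1] := by
  ext a b
  fin_cases a <;> fin_cases b <;>
    simp [Matrix.mul_apply, Fin.sum_univ_four, Matrix.vecHead, Matrix.vecTail] <;>
    (try ring)

lemma stepB12 (p : ℕ) : (!![1, -1, 0, 0; 0, 1, 1, 0; 0, 0, 1, 0; 0, 0, 0, 1] : Matrix (Fin 4) (Fin 4) (ZMod p)) * !![1, 0, 0, 0; 0, 1, 0, 0; 0, 0, 1, 0; 0, 0, 0, 1] = !![1, -1, 0, 0; 0, 1, 1, 0; 0, 0, 1, 0; 0, 0, 0, 1] := by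
  ext a b
  fin_cases a <;> fin_cases b <;>
    simp [Matrix.mul_apply, Fin.sum_univ_four, Matrix.vecHead, Matrix.vecTail] <;>
    (try ring)

lemma stepB13 (p : ℕ) : (!![1, -1, 0, 0; 0, 1, 1, 0; 0, 0, 1, 0; 0, 0, 0, 1] : Matrix (Fin 4) (Fin 4) (ZMod p)) * !![1, 1, 0, 0; 0, 1, 0, 0; 0, 0, 1, 0; 0, 0, 0, 1] = !![1, 0, 0, 0; 0, 1, 1, 0; 0, 0, 1, 0; 0, 0, 0, 1] := by
  ext a b
  fin_cases a <;> fin_cases b <;>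
    simp [Matrix.mul_apply, Fin.sum_univ_four, Matrix.vecHead, Matrix.vecTail] <;>
    (try ring)

lemma stepB14 (p : ℕ) : (!![1, 0, 0, 0; 0, 1, 1, 0; 0, 0, 1, 0; 0, 0, 0, 1] : Matrix (Fin 4) (Fin 4) (ZMod p)) * !![1, 0, 0, 0; 0, 1, -1, 0; 0, 0, 1, 0; 0, 0, 0, 1] = !![1, 0, 0, 0; 0, 1, 0, 0; 0, 0, 1, 0; 0, 0, 0, 1] := by
  ext a b
  fin_cases a <;> fin_cases b <;>
    simp [Matrix.mul_apply, Fin.sum_univ_four, Matrix.vecHead, Matrix.vecTail] <;>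
    (try ring)

lemma bigProdB (p : ℕ) :
    (1 + mg p ![3,2,1] 3) *
      (1 - mg p ![3,2,1] 0) *
      (1 + mg p ![3,2,1] 1) *
      (1 - mg p ![3,2,1] 3) *
      (1 + mg p ![3,2,1] 0) *
      (1 - mg p ![3,2,1] 1) *
      (1 + mg p ![3,2,1] 2) *
      (1 - mg p ![3,2,1] 1) *
      (1 + mg p ![3,2,1] 0) *
      (1 - mg p ![3,2,1] 3) *
      (1 + mg p ![3,2,1] 1) *
      (1 - mg p ![3,2,1] 0) *
      (1 + mg p ![3,2,1] 3) *
      (1 - mg p ![3,2,1] 2) = (!![1, 0, 0, 0; 0, 1, 0, 0; 0, 0, 1, 0; 0, 0, 0, 1] : Matrix (Fin 4) (Fin 4) (ZMod p)) := by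
  rw [facBp3, facBm0, facBp1, facBm3, facBp0, facBm1, facBp2, facBm2, stepB2, stepB3, stepB4, stepB5, stepB6, stepB7, stepB8, stepB9, stepB10, stepB11, stepB12, stepB13, stepB14]


/-- For an odd prime `p`, in `A_4` over `ℤ/pℤ` on `X_1, …, X_4` the
degree-3 component of `E^p(r_b)` has coefficient `1` on `X_4X_2X_3` and coefficient `0`
on `X_4X_3X_2`.  (The coefficient of a monomial in an element of `A_4` is computed via
any representative in the free algebra `T`.) -/
theorem magnus_rWelded_coeff (p : ℕ) (hp : p.Prime) (hodd : Odd p) :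
    ∀ t : FreeAlgebra (ZMod p) (Fin 4),
      truncMk p 4 4 t = ↑(magnus p 4 4 rWelded) →
        magnusCoeff p 4 [3, 1, 2] t = 1 ∧ magnusCoeff p 4 [3, 2, 1] t = 0 := by
  intro t ht
  constructor
  · have h01 : (![3,1,2] : Fin 3 → Fin 4) 0 ≠ ![3,1,2] 1 := by decide
    have h12 : (![3,1,2] : Fin 3 → Fin 4) 1 ≠ ![3,1,2] 2 := by decide
    have hl : ([3, 1, 2] : List (Fin 4)) =
        [(![3,1,2] : Fin 3 → Fin 4) 0, ![3,1,2] 1, ![3,1,2] 2] := by decide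
    rw [hl, coeff_eq_entry, MAlg_t p ![3,1,2] h01 h12 t ht, bigProdA]
    simp [Matrix.vecHead, Matrix.vecTail]
  · have h01 : (![3,2,1] : Fin 3 → Fin 4) 0 ≠ ![3,2,1] 1 := by decide
    have h12 : (![3,2,1] : Fin 3 → Fin 4) 1 ≠ ![3,2,1] 2 := by decide
    have hl : ([3, 2, 1] : List (Fin 4)) =
        [(![3,2,1] : Fin 3 → Fin 4) 0, ![3,2,1] 1, ![3,2,1] 2] := by decide
    rw [hl, coeff_eq_entry, MAlg_t p ![3,2,1] h01 h12 t ht, bigProdB]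
    simp [Matrix.vecHead, Matrix.vecTail]
end

section
/- Let p be an odd prime and let G be the group presented as F_5 modulo the normal closure of {r_1, r_2, r_3, r_4, r_5} ∪ W_p (i.e., G = ⟨x_1, …, x_5 | r_1, …, r_5, W_p⟩). Then for every integer q ≥ p+1, the quotient G/γ_q G is not isomorphic to F^q(5,p). -/
/-- `G = ⟨x_1, …, x_5 | r_1, …, r_5, W_p⟩`, the quotient of `F_5` by the normal closure
of `{r_1, …, r_5} ∪ W_p`. -/
def GBraid (p : ℕ) : Type :=
  FreeGroup (Fin 5) ⧸
    Subgroup.normalClosure (Set.range rF5 ∪ powSet (FreeGroup (Fin 5)) p)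

noncomputable instance (p : ℕ) : Group (GBraid p) := QuotientGroup.Quotient.group _


/-! ### Auxiliary detection groups -/


/-- A model of the free 3-generator Burnside group of exponent 3 (order 3⁷):
coordinates for the collected form `a^{a1} b^{a2} c^{a3} [b,a]^{b1} [c,a]^{b2} [c,b]^{b3} u^{c}`. -/
@[ext] structure E3 : Type where
  a1 : ZMod 3
  a2 : ZMod 3
  a3 : ZMod 3
  b1 : ZMod 3
  b2 : ZMod 3
  b3 : ZMod 3
  c : ZMod 3
  deriving DecidableEq

namespace E3

instance : Finite E3 :=
  Finite.of_injective (fun g => (g.a1, g.a2, g.a3, g.b1, g.b2, g.b3, g.c))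
    (fun a b h => by cases a; cases b; simp_all [Prod.ext_iff])

instance : Mul E3 :=
  ⟨fun g h => ⟨g.a1 + h.a1, g.a2 + h.a2, g.a3 + h.a3,
    g.a2 * h.a1 + g.b1 + h.b1, g.a3 * h.a1 + g.b2 + h.b2, g.a3 * h.a2 + g.b3 + h.b3,
    -(g.a2 * g.a3 * h.a1) - g.a2 * h.a1 * h.a3 + g.a3 * h.a1 * h.a2
      - g.b1 * h.a3 + g.b2 * h.a2 - g.b3 * h.a1 + g.c + h.c⟩⟩

instance : One E3 := ⟨⟨0, 0, 0, 0, 0, 0, 0⟩⟩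

instance : Inv E3 :=
  ⟨fun g => ⟨-g.a1, -g.a2, -g.a3, g.a1 * g.a2 - g.b1, g.a1 * g.a3 - g.b2, g.a2 * g.a3 - g.b3,
    2 * (g.a1 * g.a2 * g.a3) - g.a1 * g.b3 + g.a2 * g.b2 - g.a3 * g.b1 - g.c⟩⟩

@[simp] lemma mul_a1 (g h : E3) : (g * h).a1 = g.a1 + h.a1 := rfl
@[simp] lemma mul_a2 (g h : E3) : (g * h).a2 = g.a2 + h.a2 := rfl
@[simp] lemma mul_a3 (g h : E3) : (g * h).a3 = g.a3 + h.a3 := rfl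
@[simp] lemma mul_b1 (g h : E3) : (g * h).b1 = g.a2 * h.a1 + g.b1 + h.b1 := rfl
@[simp] lemma mul_b2 (g h : E3) : (g * h).b2 = g.a3 * h.a1 + g.b2 + h.b2 := rfl
@[simp] lemma mul_b3 (g h : E3) : (g * h).b3 = g.a3 * h.a2 + g.b3 + h.b3 := rfl
@[simp] lemma mul_c (g h : E3) : (g * h).c =
    -(g.a2 * g.a3 * h.a1) - g.a2 * h.a1 * h.a3 + g.a3 * h.a1 * h.a2
      - g.b1 * h.a3 + g.b2 * h.a2 - g.b3 * h.a1 + g.c + h.c := rfl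
@[simp] lemma one_a1 : (1 : E3).a1 = 0 := rfl
@[simp] lemma one_a2 : (1 : E3).a2 = 0 := rfl
@[simp] lemma one_a3 : (1 : E3).a3 = 0 := rfl
@[simp] lemma one_b1 : (1 : E3).b1 = 0 := rfl
@[simp] lemma one_b2 : (1 : E3).b2 = 0 := rfl
@[simp] lemma one_b3 : (1 : E3).b3 = 0 := rfl
@[simp] lemma one_c : (1 : E3).c = 0 := rfl
@[simp] lemma inv_a1 (g : E3) : (g⁻¹).a1 = -g.a1 := rfl
@[simp] lemma inv_a2 (g : E3) : (g⁻¹).a2 = -g.a2 := rfl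
@[simp] lemma inv_a3 (g : E3) : (g⁻¹).a3 = -g.a3 := rfl
@[simp] lemma inv_b1 (g : E3) : (g⁻¹).b1 = g.a1 * g.a2 - g.b1 := rfl
@[simp] lemma inv_b2 (g : E3) : (g⁻¹).b2 = g.a1 * g.a3 - g.b2 := rfl
@[simp] lemma inv_b3 (g : E3) : (g⁻¹).b3 = g.a2 * g.a3 - g.b3 := rfl
@[simp] lemma inv_c (g : E3) : (g⁻¹).c =
    2 * (g.a1 * g.a2 * g.a3) - g.a1 * g.b3 + g.a2 * g.b2 - g.a3 * g.b1 - g.c := rfl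

lemma three_eq_zero : (3 : ZMod 3) = 0 := by decide

instance : Group E3 :=
  Group.ofLeftAxioms
    (fun x y z => by
      have h3 := three_eq_zero
      ext <;> simp only [mul_a1, mul_a2, mul_a3, mul_b1, mul_b2, mul_b3, mul_c] <;>
        first
          | ring1
          | linear_combination (-(x.a3 * y.a2 * z.a1)) * h3)
    (fun x => by
      ext <;> simp only [mul_a1, mul_a2, mul_a3, mul_b1, mul_b2, mul_b3, mul_c,
        one_a1, one_a2, one_a3, one_b1, one_b2, one_b3, one_c] <;> ring)
    (fun x => by
      ext <;> simp only [mul_a1, mul_a2, mul_a3, mul_b1, mul_b2, mul_b3, mul_c,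
        inv_a1, inv_a2, inv_a3, inv_b1, inv_b2, inv_b3, inv_c,
        one_a1, one_a2, one_a3, one_b1, one_b2, one_b3, one_c] <;> ring)

lemma cube_eq_one (x : E3) : x ^ 3 = 1 := by
  have h : x ^ 3 = x * (x * x) := by
    rw [pow_succ, pow_succ, pow_one, mul_assoc]
  have h3 := three_eq_zero
  rw [h]
  ext <;> simp only [mul_a1, mul_a2, mul_a3, mul_b1, mul_b2, mul_b3, mul_c,
    one_a1, one_a2, one_a3, one_b1, one_b2, one_b3, one_c] <;>
    first
      | linear_combination x.a1 * h3
      | linear_combination x.a2 * h3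
      | linear_combination x.a3 * h3
      | linear_combination (x.a1 * x.a2 + x.b1) * h3
      | linear_combination (x.a1 * x.a3 + x.b2) * h3
      | linear_combination (x.a2 * x.a3 + x.b3) * h3
      | linear_combination (-(x.a1 * x.a2 * x.a3) - x.a1 * x.b3 + x.a2 * x.b2
          - x.a3 * x.b1 + x.c) * h3

/-- the abelianization projection. -/
def abproj : E3 →* Multiplicative (ZMod 3 × ZMod 3 × ZMod 3) :=
  MonoidHom.mk' (fun g => Multiplicative.ofAdd (g.a1, g.a2, g.a3)) (fun _ _ => rfl)

lemma lcs_three_eq_bot : (⊤ : Subgroup E3).lowerCentralSeries 3 = ⊥ := by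
  have h1 : (⊤ : Subgroup E3).lowerCentralSeries 1 ≤ abproj.ker := by
    rw [Subgroup.lowerCentralSeries_succ, Subgroup.lowerCentralSeries_zero]
    refine Subgroup.commutator_le.mpr fun g _ h _ => ?_
    rw [MonoidHom.mem_ker, map_commutatorElement]
    exact commutatorElement_eq_one_iff_mul_comm.mpr (mul_comm _ _)
  have h2 : (⊤ : Subgroup E3).lowerCentralSeries 2 ≤ Subgroup.center E3 := by
    rw [Subgroup.lowerCentralSeries_succ]
    refine Subgroup.commutator_le.mpr fun g hg h _ => ?_
    have hk := h1 hg
    rw [MonoidHom.mem_ker] at hk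
    have h0 : ((g.a1, g.a2, g.a3) : ZMod 3 × ZMod 3 × ZMod 3) = 0 := ofAdd_eq_one.mp hk
    have hg1 : g.a1 = 0 := congrArg (fun t => t.1) h0
    have hg2 : g.a2 = 0 := congrArg (fun t => t.2.1) h0
    have hg3 : g.a3 = 0 := congrArg (fun t => t.2.2) h0
    rw [Subgroup.mem_center_iff]
    intro z
    show z * (g * h * g⁻¹ * h⁻¹) = (g * h * g⁻¹ * h⁻¹) * z
    ext <;> simp only [mul_a1, mul_a2, mul_a3, mul_b1, mul_b2, mul_b3, mul_c,
      inv_a1, inv_a2, inv_a3, inv_b1, inv_b2, inv_b3, inv_c, hg1, hg2, hg3] <;> ring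
  rw [eq_bot_iff, Subgroup.lowerCentralSeries_succ]
  refine Subgroup.commutator_le.mpr fun g hg h _ => ?_
  rw [Subgroup.mem_bot, commutatorElement_eq_one_iff_mul_comm]
  exact (Subgroup.mem_center_iff.mp (h2 hg) h).symm

end E3

/-- The group of upper unitriangular 4×4 matrices over `R`, in coordinates. -/
@[ext] structure UT4 (R : Type) [CommRing R] : Type where
  a12 : R
  a13 : R
  a14 : R
  a23 : R
  a24 : R
  a34 : R

namespace UT4

variable {R : Type} [CommRing R]

instance : Mul (UT4 R) :=
  ⟨fun g h => ⟨g.a12 + h.a12, g.a13 + h.a13 + g.a12 * h.a23,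
    g.a14 + h.a14 + g.a12 * h.a24 + g.a13 * h.a34,
    g.a23 + h.a23, g.a24 + h.a24 + g.a23 * h.a34, g.a34 + h.a34⟩⟩

instance : One (UT4 R) := ⟨⟨0, 0, 0, 0, 0, 0⟩⟩

instance : Inv (UT4 R) :=
  ⟨fun g => ⟨-g.a12, -g.a13 + g.a12 * g.a23,
    -g.a14 + g.a12 * g.a24 + g.a13 * g.a34 - g.a12 * g.a23 * g.a34,
    -g.a23, -g.a24 + g.a23 * g.a34, -g.a34⟩⟩

@[simp] lemma mul_a12 (g h : UT4 R) : (g * h).a12 = g.a12 + h.a12 := rfl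
@[simp] lemma mul_a13 (g h : UT4 R) : (g * h).a13 = g.a13 + h.a13 + g.a12 * h.a23 := rfl
@[simp] lemma mul_a14 (g h : UT4 R) :
    (g * h).a14 = g.a14 + h.a14 + g.a12 * h.a24 + g.a13 * h.a34 := rfl
@[simp] lemma mul_a23 (g h : UT4 R) : (g * h).a23 = g.a23 + h.a23 := rfl
@[simp] lemma mul_a24 (g h : UT4 R) : (g * h).a24 = g.a24 + h.a24 + g.a23 * h.a34 := rfl
@[simp] lemma mul_a34 (g h : UT4 R) : (g * h).a34 = g.a34 + h.a34 := rfl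
@[simp] lemma one_a12 : (1 : UT4 R).a12 = 0 := rfl
@[simp] lemma one_a13 : (1 : UT4 R).a13 = 0 := rfl
@[simp] lemma one_a14 : (1 : UT4 R).a14 = 0 := rfl
@[simp] lemma one_a23 : (1 : UT4 R).a23 = 0 := rfl
@[simp] lemma one_a24 : (1 : UT4 R).a24 = 0 := rfl
@[simp] lemma one_a34 : (1 : UT4 R).a34 = 0 := rfl
@[simp] lemma inv_a12 (g : UT4 R) : (g⁻¹).a12 = -g.a12 := rfl
@[simp] lemma inv_a13 (g : UT4 R) : (g⁻¹).a13 = -g.a13 + g.a12 * g.a23 := rfl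
@[simp] lemma inv_a14 (g : UT4 R) :
    (g⁻¹).a14 = -g.a14 + g.a12 * g.a24 + g.a13 * g.a34 - g.a12 * g.a23 * g.a34 := rfl
@[simp] lemma inv_a23 (g : UT4 R) : (g⁻¹).a23 = -g.a23 := rfl
@[simp] lemma inv_a24 (g : UT4 R) : (g⁻¹).a24 = -g.a24 + g.a23 * g.a34 := rfl
@[simp] lemma inv_a34 (g : UT4 R) : (g⁻¹).a34 = -g.a34 := rfl

instance : Group (UT4 R) :=
  Group.ofLeftAxioms
    (fun x y z => by ext <;> simp <;> ring)
    (fun x => by ext <;> simp)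
    (fun x => by ext <;> simp <;> ring)

lemma pow_eq (g : UT4 R) (n : ℕ) :
    g ^ n = ⟨n • g.a12, n • g.a13 + n.choose 2 • (g.a12 * g.a23),
      n • g.a14 + n.choose 2 • (g.a12 * g.a24 + g.a13 * g.a34)
        + n.choose 3 • (g.a12 * g.a23 * g.a34),
      n • g.a23, n • g.a24 + n.choose 2 • (g.a23 * g.a34), n • g.a34⟩ := by
  induction n with
  | zero => ext <;> simp
  | succ n ih =>
      rw [pow_succ, ih]
      ext <;>
        simp only [mul_a12, mul_a13, mul_a14, mul_a23, mul_a24, mul_a34,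
          Nat.choose_succ_succ, Nat.choose_one_right, Nat.choose_zero_right,
          nsmul_eq_mul, Nat.cast_add, Nat.cast_one] <;> ring

lemma pow_p_eq_one (p : ℕ) (hp : p.Prime) (h5 : 5 ≤ p) (g : UT4 (ZMod p)) : g ^ p = 1 := by
  have h1 : ((p : ℕ) : ZMod p) = 0 := ZMod.natCast_self p
  have h2 : ((p.choose 2 : ℕ) : ZMod p) = 0 := by
    rw [ZMod.natCast_eq_zero_iff]
    exact hp.dvd_choose_self (by norm_num) (by omega)
  have h3 : ((p.choose 3 : ℕ) : ZMod p) = 0 := by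
    rw [ZMod.natCast_eq_zero_iff]
    exact hp.dvd_choose_self (by norm_num) (by omega)
  rw [pow_eq]
  ext <;> simp [nsmul_eq_mul, h1, h2, h3]

/-- the abelianization projection. -/
def abproj : UT4 R →* Multiplicative (R × R × R) :=
  MonoidHom.mk' (fun g => Multiplicative.ofAdd (g.a12, g.a23, g.a34)) (fun _ _ => rfl)

lemma lcs_three_eq_bot : (⊤ : Subgroup (UT4 R)).lowerCentralSeries 3 = ⊥ := by
  have h1 : (⊤ : Subgroup (UT4 R)).lowerCentralSeries 1 ≤ (abproj (R := R)).ker := by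
    rw [Subgroup.lowerCentralSeries_succ, Subgroup.lowerCentralSeries_zero]
    refine Subgroup.commutator_le.mpr fun g _ h _ => ?_
    rw [MonoidHom.mem_ker, map_commutatorElement]
    exact commutatorElement_eq_one_iff_mul_comm.mpr (mul_comm _ _)
  have h2 : (⊤ : Subgroup (UT4 R)).lowerCentralSeries 2 ≤ Subgroup.center (UT4 R) := by
    rw [Subgroup.lowerCentralSeries_succ]
    refine Subgroup.commutator_le.mpr fun g hg h _ => ?_
    have hk := h1 hg
    rw [MonoidHom.mem_ker] at hk
    have h0 : ((g.a12, g.a23, g.a34) : R × R × R) = 0 := ofAdd_eq_one.mp hk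
    have hg1 : g.a12 = 0 := congrArg (fun t => t.1) h0
    have hg2 : g.a23 = 0 := congrArg (fun t => t.2.1) h0
    have hg3 : g.a34 = 0 := congrArg (fun t => t.2.2) h0
    rw [Subgroup.mem_center_iff]
    intro z
    show z * (g * h * g⁻¹ * h⁻¹) = (g * h * g⁻¹ * h⁻¹) * z
    ext <;> simp only [mul_a12, mul_a13, mul_a14, mul_a23, mul_a24, mul_a34,
      inv_a12, inv_a13, inv_a14, inv_a23, inv_a24, inv_a34, hg1, hg2, hg3] <;> ring
  rw [eq_bot_iff, Subgroup.lowerCentralSeries_succ]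
  refine Subgroup.commutator_le.mpr fun g hg h _ => ?_
  rw [Subgroup.mem_bot, commutatorElement_eq_one_iff_mul_comm]
  exact (Subgroup.mem_center_iff.mp (h2 hg) h).symm

instance (p : ℕ) [NeZero p] : Finite (UT4 (ZMod p)) :=
  Finite.of_injective (fun g => (g.a12, g.a13, g.a14, g.a23, g.a24, g.a34))
    (fun a b h => by cases a; cases b; simp_all [Prod.ext_iff])

end UT4


/-! ### Detection of the relator -/

/-- generator images in `E3`. -/
def fE3 : Fin 5 → E3 :=
  ![1, 1, ⟨1, 0, 0, 0, 0, 0, 0⟩, ⟨0, 1, 0, 0, 0, 0, 0⟩, ⟨0, 0, 1, 0, 0, 0, 0⟩]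

lemma E3_detect : FreeGroup.lift fE3 (rF5 0) ≠ 1 := by
  have : FreeGroup.lift fE3 (rF5 0) = ⟨0, 0, 0, 0, 0, 0, 1⟩ := by
    simp only [rF5, QF5, xF5, map_mul, map_inv, FreeGroup.lift_apply_of]
    decide
  rw [this]
  decide

/-- generator images in `UT4 R`. -/
def fUT4 (R : Type) [CommRing R] : Fin 5 → UT4 R :=
  ![⟨1, 0, 0, 0, 0, 0⟩, ⟨1, 0, 0, 0, 0, 0⟩, ⟨1, 0, 0, 0, 0, 0⟩,
    ⟨0, 0, 0, 1, 0, 0⟩, ⟨0, 0, 0, 0, 0, 1⟩]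

lemma UT4_detect (R : Type) [CommRing R] [Nontrivial R] :
    FreeGroup.lift (fUT4 R) (rF5 0) ≠ 1 := by
  have h0 : fUT4 R 0 = ⟨1, 0, 0, 0, 0, 0⟩ := rfl
  have h1 : fUT4 R 1 = ⟨1, 0, 0, 0, 0, 0⟩ := rfl
  have h2 : fUT4 R 2 = ⟨1, 0, 0, 0, 0, 0⟩ := rfl
  have h3 : fUT4 R 3 = ⟨0, 0, 0, 1, 0, 0⟩ := rfl
  have h4 : fUT4 R 4 = ⟨0, 0, 0, 0, 0, 1⟩ := rfl
  have key : FreeGroup.lift (fUT4 R) (rF5 0) = ⟨0, 0, 1, 0, 0, 0⟩ := by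
    simp only [rF5, QF5, xF5, map_mul, map_inv, FreeGroup.lift_apply_of, h0, h1, h2, h3, h4]
    ext <;>
      simp only [UT4.mul_a12, UT4.mul_a13, UT4.mul_a14, UT4.mul_a23, UT4.mul_a24, UT4.mul_a34,
        UT4.inv_a12, UT4.inv_a13, UT4.inv_a14, UT4.inv_a23, UT4.inv_a24, UT4.inv_a34] <;>
      norm_num
  rw [key]
  intro hcon
  have : (1 : R) = 0 := congrArg (fun g => UT4.a14 g) hcon
  exact one_ne_zero this

/-! ### The counting argument -/

lemma key_lemma (p q : ℕ) (hq3 : 3 ≤ q - 1) (H : Type) [Group H] [Finite H]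
    (hexp : ∀ x : H, x ^ p = 1) (hnil : (⊤ : Subgroup H).lowerCentralSeries 3 = ⊥)
    (f : Fin 5 → H) (hf : FreeGroup.lift f (rF5 0) ≠ 1) :
    ¬ Nonempty ((GBraid p ⧸ (⊤ : Subgroup (GBraid p)).lowerCentralSeries (q - 1)) ≃*
        BurnsideQuot 5 p q) := by
  rintro ⟨e⟩
  have hker : ∀ f' : Fin 5 → H, WbarGamma 5 p q ≤ (FreeGroup.lift f').ker := by
    intro f'
    refine sup_le ?_ ?_
    · refine Subgroup.normalClosure_le_normal ?_
      rintro x ⟨w, rfl⟩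
      rw [SetLike.mem_coe, MonoidHom.mem_ker, map_pow]
      exact hexp _
    · intro x hx
      rw [MonoidHom.mem_ker]
      have hmono : ∀ n, ((⊤ : Subgroup (FreeGroup (Fin 5))).map (FreeGroup.lift f')).lowerCentralSeries n
          ≤ (⊤ : Subgroup H).lowerCentralSeries n := by
        intro n
        induction n with
        | zero => exact le_top
        | succ n ih => exact Subgroup.commutator_mono ih le_top
      have h1 : FreeGroup.lift f' x ∈ (⊤ : Subgroup H).lowerCentralSeries (q - 1) :=
        hmono _ (by rw [← Subgroup.map_lowerCentralSeries]; exact ⟨x, hx, rfl⟩)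
      have h2 : (⊤ : Subgroup H).lowerCentralSeries (q - 1) ≤ ⊥ :=
        hnil ▸ Subgroup.lowerCentralSeries_antitone (S := ⊤) hq3
      simpa using h2 h1
  let Ψ : (Fin 5 → H) → (BurnsideQuot 5 p q →* H) := fun f' =>
    QuotientGroup.lift (WbarGamma 5 p q) (FreeGroup.lift f') (hker f')
  let mkA : FreeGroup (Fin 5) →* (GBraid p ⧸ (⊤ : Subgroup (GBraid p)).lowerCentralSeries (q - 1)) :=
    (QuotientGroup.mk' ((⊤ : Subgroup (GBraid p)).lowerCentralSeries (q - 1))).comp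
      (QuotientGroup.mk'
        (Subgroup.normalClosure (Set.range rF5 ∪ powSet (FreeGroup (Fin 5)) p)))
  have hmkA : Function.Surjective mkA :=
    (QuotientGroup.mk'_surjective _).comp (QuotientGroup.mk'_surjective _)
  let Φ : (Fin 5 → H) → (Fin 5 → H) := fun f' i => Ψ f' (e (mkA (FreeGroup.of i)))
  have hΨmk : ∀ (f' : Fin 5 → H) (w : FreeGroup (Fin 5)),
      Ψ f' (QuotientGroup.mk w) = FreeGroup.lift f' w := fun f' w => rfl
  have hinj : Function.Injective Φ := by
    intro f1 f2 h12
    have hhom : ((Ψ f1).comp (e.toMonoidHom.comp mkA)) =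
        ((Ψ f2).comp (e.toMonoidHom.comp mkA)) :=
      FreeGroup.ext_hom _ _ fun i => congrFun h12 i
    have hB : ∀ b, Ψ f1 b = Ψ f2 b := by
      intro b
      obtain ⟨w, hw⟩ := hmkA (e.symm b)
      have hw' : e (mkA w) = b := by rw [hw]; exact e.apply_symm_apply b
      have hcf := DFunLike.congr_fun hhom w
      simpa [MonoidHom.comp_apply, hw'] using hcf
    funext i
    have := hB (QuotientGroup.mk (FreeGroup.of i))
    simpa [hΨmk, FreeGroup.lift_apply_of] using this
  obtain ⟨f', hf'⟩ := Finite.surjective_of_injective hinj f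
  have hg : ((Ψ f').comp (e.toMonoidHom.comp mkA)) = FreeGroup.lift f :=
    FreeGroup.ext_hom _ _ fun i => by
      have := congrFun hf' i
      simpa [Φ, FreeGroup.lift_apply_of, MonoidHom.comp_apply] using this
  have hr1 : mkA (rF5 0) = 1 := by
    have h0 : rF5 0 ∈
        Subgroup.normalClosure (Set.range rF5 ∪ powSet (FreeGroup (Fin 5)) p) :=
      Subgroup.subset_normalClosure (Or.inl ⟨0, rfl⟩)
    show (QuotientGroup.mk' ((⊤ : Subgroup (GBraid p)).lowerCentralSeries (q - 1)))
        ((QuotientGroup.mk'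
          (Subgroup.normalClosure (Set.range rF5 ∪ powSet (FreeGroup (Fin 5)) p))) (rF5 0)) = 1
    have hq1 : (QuotientGroup.mk'
        (Subgroup.normalClosure (Set.range rF5 ∪ powSet (FreeGroup (Fin 5)) p))) (rF5 0) = 1 :=
      (QuotientGroup.eq_one_iff _).mpr h0
    rw [hq1]
    exact map_one _
  apply hf
  rw [← hg]
  simp only [MonoidHom.comp_apply, MulEquiv.coe_toMonoidHom, hr1, map_one]


/-- For every odd prime `p` and every integer `q ≥ p+1`, the quotient
`G/γ_q G` is not isomorphic to `F^q(5,p)`, where `G = ⟨x_1, …, x_5 | r_1, …, r_5, W_p⟩`. -/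
theorem GBraid_quot_not_iso (p : ℕ) (hp : p.Prime) (hodd : Odd p)
    (q : ℕ) (hq : p + 1 ≤ q) :
    ¬ Nonempty ((GBraid p ⧸ (⊤ : Subgroup (GBraid p)).lowerCentralSeries (q - 1)) ≃*
        BurnsideQuot 5 p q) := by
  have hp2 : p ≠ 2 := by rintro rfl; exact absurd hodd (by decide)
  have hp3 : 3 ≤ p := by have := hp.two_le; omega
  have hq3 : 3 ≤ q - 1 := by omega
  by_cases h3 : p = 3
  · subst h3
    exact key_lemma 3 q hq3 E3 (fun x => E3.cube_eq_one x) E3.lcs_three_eq_bot fE3 E3_detect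
  · have h4 : p ≠ 4 := by rintro rfl; norm_num at hp
    have hp5 : 5 ≤ p := by omega
    haveI : NeZero p := ⟨hp.pos.ne'⟩
    haveI : Fact (1 < p) := ⟨hp.one_lt⟩
    exact key_lemma p q hq3 (UT4 (ZMod p)) (fun x => UT4.pow_p_eq_one p hp hp5 x)
      UT4.lcs_three_eq_bot (fUT4 (ZMod p)) (UT4_detect (ZMod p))
end

section
/- Let p be an odd prime and let G be the group presented as F_4 modulo the normal closure of {r_b} ∪ W_p (i.e., G = ⟨x_1, x_2, x_3, x_4 | r_b, W_p⟩). Then for every integer q ≥ p+1, the quotient G/γ_q G is not isomorphic to F^q(4,p). -/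
/-- `G = ⟨x_1, x_2, x_3, x_4 | r_b, W_p⟩`, the quotient of `F_4` by the normal closure
of `{r_b} ∪ W_p`. -/
def GWelded (p : ℕ) : Type :=
  FreeGroup (Fin 4) ⧸
    Subgroup.normalClosure ({rWelded} ∪ powSet (FreeGroup (Fin 4)) p)

noncomputable instance (p : ℕ) : Group (GWelded p) := QuotientGroup.Quotient.group _

namespace GWAux

open scoped commutatorElement

/-- A class-3, exponent-`p` (for odd `p`) group built from truncated tensor coordinates. -/
def Hc (p : ℕ) : Type := (Fin 3 → ZMod p) × (Fin 3 → Fin 3 → ZMod p) × ZMod p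

variable {p : ℕ}

instance : Mul (Hc p) :=
  ⟨fun x y =>
    ⟨fun i => x.1 i + y.1 i,
     fun i j => x.2.1 i j + y.2.1 i j + x.1 i * y.1 j,
     x.2.2 + y.2.2 + (x.1 0 * y.2.1 1 2 - x.1 1 * y.2.1 0 2)
       + (x.2.1 0 1 * y.1 2 - x.2.1 1 0 * y.1 2)⟩⟩

instance : One (Hc p) := ⟨⟨fun _ => 0, fun _ _ => 0, 0⟩⟩

instance : Inv (Hc p) :=
  ⟨fun x =>
    ⟨fun i => -x.1 i,
     fun i j => -x.2.1 i j + x.1 i * x.1 j,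
     -x.2.2 + (x.1 0 * x.2.1 1 2 - x.1 1 * x.2.1 0 2)
       + (x.2.1 0 1 * x.1 2 - x.2.1 1 0 * x.1 2)⟩⟩

lemma mul_def (x y : Hc p) : x * y =
    ⟨fun i => x.1 i + y.1 i,
     fun i j => x.2.1 i j + y.2.1 i j + x.1 i * y.1 j,
     x.2.2 + y.2.2 + (x.1 0 * y.2.1 1 2 - x.1 1 * y.2.1 0 2)
       + (x.2.1 0 1 * y.1 2 - x.2.1 1 0 * y.1 2)⟩ := rfl

lemma one_def : (1 : Hc p) = ⟨fun _ => 0, fun _ _ => 0, 0⟩ := rfl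

lemma inv_def (x : Hc p) : x⁻¹ =
    ⟨fun i => -x.1 i,
     fun i j => -x.2.1 i j + x.1 i * x.1 j,
     -x.2.2 + (x.1 0 * x.2.1 1 2 - x.1 1 * x.2.1 0 2)
       + (x.2.1 0 1 * x.1 2 - x.2.1 1 0 * x.1 2)⟩ := rfl

instance : Group (Hc p) where
  mul_assoc x y z := by
    refine Prod.ext (funext fun i => ?_) (Prod.ext (funext fun i => funext fun j => ?_) ?_) <;>
      rw [mul_def, mul_def, mul_def, mul_def] <;> ring
  one_mul x := by
    refine Prod.ext (funext fun i => ?_) (Prod.ext (funext fun i => funext fun j => ?_) ?_) <;>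
      rw [mul_def, one_def] <;> ring
  mul_one x := by
    refine Prod.ext (funext fun i => ?_) (Prod.ext (funext fun i => funext fun j => ?_) ?_) <;>
      rw [mul_def, one_def] <;> ring
  inv_mul_cancel x := by
    refine Prod.ext (funext fun i => ?_) (Prod.ext (funext fun i => funext fun j => ?_) ?_) <;>
      rw [mul_def, inv_def, one_def] <;> ring

lemma pow_def (x : Hc p) (n : ℕ) : x ^ n =
    (⟨fun i => (n : ZMod p) * x.1 i,
      fun i j => (n : ZMod p) * x.2.1 i j + ((n.choose 2 : ℕ) : ZMod p) * (x.1 i * x.1 j),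
      (n : ZMod p) * x.2.2 + ((n.choose 2 : ℕ) : ZMod p) *
        ((x.1 0 * x.2.1 1 2 - x.1 1 * x.2.1 0 2)
          + (x.2.1 0 1 * x.1 2 - x.2.1 1 0 * x.1 2))⟩ : Hc p) := by
  induction n with
  | zero =>
    refine Prod.ext (funext fun i => ?_) (Prod.ext (funext fun i => funext fun j => ?_) ?_) <;>
      simp [one_def]
  | succ n ih =>
    rw [pow_succ, mul_def, ih]
    have hch : ((n + 1).choose 2 : ℕ) = n.choose 2 + n := by
      rw [Nat.choose_succ_succ, Nat.choose_one_right, Nat.add_comm]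
    refine Prod.ext (funext fun i => ?_) (Prod.ext (funext fun i => funext fun j => ?_) ?_) <;>
      simp only [hch, Nat.cast_add, Nat.cast_one] <;> ring

lemma pow_p_eq_one (hp : p.Prime) (hodd : Odd p) (x : Hc p) : x ^ p = 1 := by
  have hne2 : p ≠ 2 := by rintro rfl; exact (by decide : ¬ Odd 2) hodd
  have h2lt : 2 < p := lt_of_le_of_ne hp.two_le (Ne.symm hne2)
  have hdvd : p ∣ p.choose 2 := Nat.Prime.dvd_choose_self hp (by norm_num) h2lt
  have h1 : ((p : ℕ) : ZMod p) = 0 := ZMod.natCast_self p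
  have h2 : ((p.choose 2 : ℕ) : ZMod p) = 0 := (ZMod.natCast_eq_zero_iff _ _).mpr hdvd
  rw [pow_def, h1, h2]
  refine Prod.ext (funext fun i => ?_) (Prod.ext (funext fun i => funext fun j => ?_) ?_) <;>
    simp [one_def]

/-- Elements with vanishing degree-1 part. -/
def K1 (p : ℕ) : Subgroup (Hc p) where
  carrier := {x | x.1 = 0}
  mul_mem' := by
    intro a b ha hb
    simp only [Set.mem_setOf_eq, mul_def] at *
    funext i; simp [ha, hb]
  one_mem' := by simp only [Set.mem_setOf_eq, one_def]; rfl
  inv_mem' := by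
    intro a ha
    simp only [Set.mem_setOf_eq, inv_def] at *
    funext i; simp [ha]

/-- Elements with vanishing degree-1 and degree-2 parts; these are central. -/
def K2 (p : ℕ) : Subgroup (Hc p) where
  carrier := {x | x.1 = 0 ∧ x.2.1 = 0}
  mul_mem' := by
    intro a b ha hb
    simp only [Set.mem_setOf_eq, mul_def] at *
    exact ⟨by funext i; simp [ha.1, hb.1], by funext i j; simp [ha.1, ha.2, hb.1, hb.2]⟩
  one_mem' := by exact ⟨rfl, rfl⟩
  inv_mem' := by
    intro a ha
    simp only [Set.mem_setOf_eq, inv_def] at *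
    exact ⟨by funext i; simp [ha.1], by funext i j; simp [ha.1, ha.2]⟩

lemma comm_mem_K1 (x y : Hc p) : ⁅x, y⁆ ∈ K1 p := by
  show (⁅x, y⁆).1 = 0
  rw [commutatorElement_def]
  rw [mul_def, mul_def, mul_def]; simp only [inv_def]
  funext i; simp

lemma comm_K1_mem_K2 (x y : Hc p) (hx : x ∈ K1 p) : ⁅x, y⁆ ∈ K2 p := by
  have hx1 : x.1 = 0 := hx
  constructor
  · exact comm_mem_K1 x y
  · show (⁅x, y⁆).2.1 = 0
    rw [commutatorElement_def]
    rw [mul_def, mul_def, mul_def]; simp only [inv_def, hx1]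
    funext i j; simp

lemma comm_K2_eq_one (x y : Hc p) (hx : x ∈ K2 p) : ⁅x, y⁆ = 1 := by
  obtain ⟨hx1, hx2⟩ := hx
  rw [commutatorElement_def]
  refine Prod.ext (funext fun i => ?_) (Prod.ext (funext fun i => funext fun j => ?_) ?_) <;>
    rw [mul_def, mul_def, mul_def] <;> simp only [inv_def, one_def, hx1, hx2] <;> simp <;> ring

lemma lcs_three_eq_bot : (⊤ : Subgroup (Hc p)).lowerCentralSeries 3 = ⊥ := by
  have h1 : (⊤ : Subgroup (Hc p)).lowerCentralSeries 1 ≤ K1 p := by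
    show ⁅(⊤ : Subgroup (Hc p)).lowerCentralSeries 0, ⊤⁆ ≤ K1 p
    rw [Subgroup.commutator_le]
    intro g₁ _ g₂ _
    exact comm_mem_K1 g₁ g₂
  have h2 : (⊤ : Subgroup (Hc p)).lowerCentralSeries 2 ≤ K2 p := by
    show ⁅(⊤ : Subgroup (Hc p)).lowerCentralSeries 1, ⊤⁆ ≤ K2 p
    calc ⁅(⊤ : Subgroup (Hc p)).lowerCentralSeries 1, ⊤⁆ ≤ ⁅K1 p, ⊤⁆ :=
          Subgroup.commutator_mono h1 le_rfl
      _ ≤ K2 p := by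
          rw [Subgroup.commutator_le]
          intro g₁ hg₁ g₂ _
          exact comm_K1_mem_K2 g₁ g₂ hg₁
  have h3 : (⊤ : Subgroup (Hc p)).lowerCentralSeries 3 ≤ ⊥ := by
    show ⁅(⊤ : Subgroup (Hc p)).lowerCentralSeries 2, ⊤⁆ ≤ ⊥
    calc ⁅(⊤ : Subgroup (Hc p)).lowerCentralSeries 2, ⊤⁆ ≤ ⁅K2 p, ⊤⁆ :=
          Subgroup.commutator_mono h2 le_rfl
      _ ≤ ⊥ := by
          rw [Subgroup.commutator_le]
          intro g₁ hg₁ g₂ _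
          simp [comm_K2_eq_one g₁ g₂ hg₁]
  exact le_bot_iff.mp h3


def vec3 (a b c : ZMod p) : Fin 3 → ZMod p := fun i => if i = 0 then a else if i = 1 then b else c

def mat3 (m00 m01 m02 m10 m11 m12 m20 m21 m22 : ZMod p) : Fin 3 → Fin 3 → ZMod p :=
  fun i => if i = 0 then vec3 m00 m01 m02 else if i = 1 then vec3 m10 m11 m12 else vec3 m20 m21 m22

/-- A fully explicit element of `Hc p`. -/
def el (a0 a1 a2 m00 m01 m02 m10 m11 m12 m20 m21 m22 c : ZMod p) : Hc p :=
  ⟨vec3 a0 a1 a2, mat3 m00 m01 m02 m10 m11 m12 m20 m21 m22, c⟩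

lemma el_congr {a0 a1 a2 m00 m01 m02 m10 m11 m12 m20 m21 m22 c
    b0 b1 b2 n00 n01 n02 n10 n11 n12 n20 n21 n22 d : ZMod p}
    (h0 : a0 = b0) (h1 : a1 = b1) (h2 : a2 = b2)
    (g00 : m00 = n00) (g01 : m01 = n01) (g02 : m02 = n02)
    (g10 : m10 = n10) (g11 : m11 = n11) (g12 : m12 = n12)
    (g20 : m20 = n20) (g21 : m21 = n21) (g22 : m22 = n22) (hc : c = d) :
    (el a0 a1 a2 m00 m01 m02 m10 m11 m12 m20 m21 m22 c : Hc p)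
      = el b0 b1 b2 n00 n01 n02 n10 n11 n12 n20 n21 n22 d := by
  subst h0 h1 h2 g00 g01 g02 g10 g11 g12 g20 g21 g22 hc; rfl

lemma el_mul (a0 a1 a2 m00 m01 m02 m10 m11 m12 m20 m21 m22 c
    b0 b1 b2 n00 n01 n02 n10 n11 n12 n20 n21 n22 d : ZMod p) :
    (el a0 a1 a2 m00 m01 m02 m10 m11 m12 m20 m21 m22 c : Hc p)
      * el b0 b1 b2 n00 n01 n02 n10 n11 n12 n20 n21 n22 d
    = el (a0 + b0) (a1 + b1) (a2 + b2)
        (m00 + n00 + a0 * b0) (m01 + n01 + a0 * b1) (m02 + n02 + a0 * b2)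
        (m10 + n10 + a1 * b0) (m11 + n11 + a1 * b1) (m12 + n12 + a1 * b2)
        (m20 + n20 + a2 * b0) (m21 + n21 + a2 * b1) (m22 + n22 + a2 * b2)
        (c + d + (a0 * n12 - a1 * n02) + (m01 * b2 - m10 * b2)) := by
  refine Prod.ext ?_ (Prod.ext ?_ ?_)
  · rw [mul_def]; funext i; fin_cases i <;> simp [el, vec3, mat3, mul_def]
  · rw [mul_def]; funext i j; fin_cases i <;> fin_cases j <;> simp [el, vec3, mat3, mul_def]
  · rw [mul_def]; simp [el, vec3, mat3, mul_def]

lemma el_inv (a0 a1 a2 m00 m01 m02 m10 m11 m12 m20 m21 m22 c : ZMod p) :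
    (el a0 a1 a2 m00 m01 m02 m10 m11 m12 m20 m21 m22 c : Hc p)⁻¹
    = el (-a0) (-a1) (-a2)
        (-m00 + a0 * a0) (-m01 + a0 * a1) (-m02 + a0 * a2)
        (-m10 + a1 * a0) (-m11 + a1 * a1) (-m12 + a1 * a2)
        (-m20 + a2 * a0) (-m21 + a2 * a1) (-m22 + a2 * a2)
        (-c + (a0 * m12 - a1 * m02) + (m01 * a2 - m10 * a2)) := by
  refine Prod.ext ?_ (Prod.ext ?_ ?_)
  · rw [inv_def]; funext i; fin_cases i <;> simp [el, vec3, mat3, inv_def]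
  · rw [inv_def]; funext i j; fin_cases i <;> fin_cases j <;> simp [el, vec3, mat3, inv_def]
  · rw [inv_def]; simp [el, vec3, mat3, inv_def]

def uu (p : ℕ) : Hc p := el 1 0 0 0 0 0 0 0 0 0 0 0 0
def vv (p : ℕ) : Hc p := el 0 1 0 0 0 0 0 0 0 0 0 0 0
def ww (p : ℕ) : Hc p := el 0 0 1 0 0 0 0 0 0 0 0 0 0

lemma word_val (p : ℕ) :
    vv p * (uu p)⁻¹ * (vv p)⁻¹ * uu p * ww p * uu p * (vv p)⁻¹ * (uu p)⁻¹ * vv p * (ww p)⁻¹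
      = el 0 0 0 0 0 0 0 0 0 0 0 0 2 := by
  rw [uu, vv, ww]
  rw [el_inv, el_inv, el_inv]
  rw [el_mul, el_mul, el_mul, el_mul, el_mul, el_mul, el_mul, el_mul, el_mul]
  refine el_congr ?_ ?_ ?_ ?_ ?_ ?_ ?_ ?_ ?_ ?_ ?_ ?_ ?_ <;> ring

end GWAux


namespace GWAux

lemma lcs_map_eq {G H : Type*} [Group G] [Group H] (f : G →* H)
    (hf : Function.Surjective f) (n : ℕ) :
    Subgroup.map f ((⊤ : Subgroup G).lowerCentralSeries n) = (⊤ : Subgroup H).lowerCentralSeries n := by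
  induction n with
  | zero =>
    show Subgroup.map f ⊤ = ⊤
    exact Subgroup.map_top_of_surjective f hf
  | succ n ih =>
    show Subgroup.map f ⁅(⊤ : Subgroup G).lowerCentralSeries n, ⊤⁆ = ⁅(⊤ : Subgroup H).lowerCentralSeries n, ⊤⁆
    rw [Subgroup.map_commutator, ih, Subgroup.map_top_of_surjective f hf]

end GWAux


set_option maxHeartbeats 1000000

/-- For every odd prime `p` and every integer `q ≥ p+1`, the quotient
`G/γ_q G` is not isomorphic to `F^q(4,p)`, where `G = ⟨x_1, …, x_4 | r_b, W_p⟩`. -/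
theorem GWelded_quot_not_iso (p : ℕ) (hp : p.Prime) (hodd : Odd p)
    (q : ℕ) (hq : p + 1 ≤ q) :
    ¬ Nonempty ((GWelded p ⧸ (⊤ : Subgroup (GWelded p)).lowerCentralSeries (q - 1)) ≃*
        BurnsideQuot 4 p q) := by
  rintro ⟨e⟩
  haveI : NeZero p := ⟨hp.ne_zero⟩
  have hp3 : 3 ≤ p := (Nat.Prime.two_le hp).lt_of_ne (fun h => by
    rw [← h] at hodd; exact (by decide : ¬ Odd 2) hodd)
  -- the free group and relevant normal subgroups
  set F := FreeGroup (Fin 4) with hF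
  set N : Subgroup F := Subgroup.normalClosure ({rWelded} ∪ powSet F p) with hN
  set M₁ : Subgroup F := WbarGamma 4 p q with hM1
  set M₂ : Subgroup F := N ⊔ (⊤ : Subgroup F).lowerCentralSeries (q - 1) with hM2
  haveI hM₂n : M₂.Normal := Subgroup.sup_normal _ _
  have hM12 : M₁ ≤ M₂ := by
    rw [hM1, hM2]
    exact sup_le_sup_right
      (Subgroup.normalClosure_mono Set.subset_union_right) _
  have hrM2 : rWelded ∈ M₂ := by
    rw [hM2]
    exact le_sup_left (α := Subgroup F)
      (Subgroup.subset_normalClosure (Set.mem_union_left _ rfl))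
  -- the witness homomorphism to the auxiliary group
  let t0 : Fin 4 → GWAux.Hc p := ![GWAux.uu p, 1, GWAux.ww p, GWAux.vv p]
  let f : F →* GWAux.Hc p := FreeGroup.lift t0
  have hft : ∀ i, f (FreeGroup.of i) = t0 i := fun i => FreeGroup.lift_apply_of
  have hfr : f rWelded = GWAux.el 0 0 0 0 0 0 0 0 0 0 0 0 2 := by
    have h0 : f (xF4 0) = GWAux.uu p := hft 0
    have h1 : f (xF4 1) = 1 := hft 1
    have h2 : f (xF4 2) = GWAux.ww p := hft 2
    have h3 : f (xF4 3) = GWAux.vv p := hft 3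
    have i0 : f (xF4 0)⁻¹ = (GWAux.uu p)⁻¹ := by rw [← h0]; exact map_inv f _
    have i1 : f (xF4 1)⁻¹ = 1⁻¹ := by rw [← h1]; exact map_inv f _
    have i2 : f (xF4 2)⁻¹ = (GWAux.ww p)⁻¹ := by rw [← h2]; exact map_inv f _
    have i3 : f (xF4 3)⁻¹ = (GWAux.vv p)⁻¹ := by rw [← h3]; exact map_inv f _
    rw [rWelded, QWelded]
    simp only [map_mul, map_inv, i0, i1, i2, i3, h0, h1, h2, h3, inv_one, mul_one, one_mul]
    exact GWAux.word_val p
  have hfr_ne : f rWelded ≠ 1 := by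
    rw [hfr]
    intro h
    have h2 : ((2 : ℕ) : ZMod p) = 0 := by
      have := congrArg (fun z : GWAux.Hc p => z.2.2) h
      simpa [GWAux.el, GWAux.one_def] using this
    rw [ZMod.natCast_eq_zero_iff] at h2
    have := Nat.le_of_dvd (by norm_num) h2
    omega
  -- f kills M₁
  have hker : M₁ ≤ f.ker := by
    rw [hM1]
    refine sup_le ?_ ?_
    · refine Subgroup.normalClosure_le_normal ?_
      rintro x ⟨w, rfl⟩
      have : f (w ^ p) = 1 := by
        rw [map_pow]; exact GWAux.pow_p_eq_one hp hodd _
      simpa [MonoidHom.mem_ker] using this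
    · have hle : (⊤ : Subgroup F).lowerCentralSeries (q - 1) ≤ (⊤ : Subgroup F).lowerCentralSeries 3 :=
        Subgroup.lowerCentralSeries_antitone (S := ⊤) (by omega)
      refine le_trans hle ?_
      intro x hx
      have hmem : f x ∈ (⊤ : Subgroup (GWAux.Hc p)).lowerCentralSeries 3 :=
        Subgroup.lowerCentralSeries_mono 3 (le_top : Subgroup.map f ⊤ ≤ ⊤)
          (by show f x ∈ (Subgroup.map f ⊤).lowerCentralSeries 3
              rw [← Subgroup.map_lowerCentralSeries]; exact ⟨x, hx, rfl⟩)
      rw [GWAux.lcs_three_eq_bot] at hmem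
      simpa [MonoidHom.mem_ker] using hmem
  -- the induced homomorphism on the Burnside quotient
  let h₀ : (F ⧸ M₁) →* GWAux.Hc p := QuotientGroup.lift M₁ f hker
  -- canonical surjection between the two quotients
  let π : (F ⧸ M₁) →* (F ⧸ M₂) :=
    QuotientGroup.map M₁ M₂ (MonoidHom.id F) (by simpa [Subgroup.comap_id] using hM12)
  have hπmk : ∀ x : F, π (QuotientGroup.mk x) = QuotientGroup.mk x := by
    intro x
    simpa using QuotientGroup.map_mk' M₁ M₂ (MonoidHom.id F)
      (by simpa [Subgroup.comap_id] using hM12) x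
  have hπs : Function.Surjective π := by
    intro y
    obtain ⟨x, rfl⟩ := QuotientGroup.mk'_surjective M₂ y
    exact ⟨QuotientGroup.mk x, hπmk x⟩
  -- identify GWelded p ⧸ γ with F ⧸ M₂
  have key : (⊤ : Subgroup (GWelded p)).lowerCentralSeries (q - 1)
      = Subgroup.map (QuotientGroup.mk' N) M₂ := by
    rw [hM2, Subgroup.map_sup]
    have hb : Subgroup.map (QuotientGroup.mk' N) N = ⊥ :=
      (Subgroup.map_eq_bot_iff N).mpr (le_of_eq (QuotientGroup.ker_mk' N).symm)
    rw [hb, bot_sup_eq]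
    exact (GWAux.lcs_map_eq (QuotientGroup.mk' N) (QuotientGroup.mk'_surjective N) _).symm
  have key' : (⊤ : Subgroup (GWelded p)).lowerCentralSeries (q - 1)
      = @id (Subgroup (GWelded p)) (Subgroup.map (QuotientGroup.mk' N) M₂) := key
  haveI : (@id (Subgroup (GWelded p)) (Subgroup.map (QuotientGroup.mk' N) M₂)).Normal :=
    Subgroup.Normal.map hM₂n _ (QuotientGroup.mk'_surjective N)
  let ψ : (GWelded p ⧸ (⊤ : Subgroup (GWelded p)).lowerCentralSeries (q - 1)) ≃* (F ⧸ M₂) :=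
    (QuotientGroup.quotientMulEquivOfEq key').trans
      (QuotientGroup.quotientQuotientEquivQuotient N M₂ le_sup_left)
  -- total isomorphism F ⧸ M₂ ≃* F ⧸ M₁
  let e' : (GWelded p ⧸ (⊤ : Subgroup (GWelded p)).lowerCentralSeries (q - 1)) ≃* (F ⧸ M₁) := e
  let Φ : (F ⧸ M₂) ≃* (F ⧸ M₁) := ψ.symm.trans e'
  -- finiteness of hom sets
  haveI : Finite (GWAux.Hc p) :=
    inferInstanceAs (Finite ((Fin 3 → ZMod p) × (Fin 3 → Fin 3 → ZMod p) × ZMod p))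
  have hfin : ∀ (M : Subgroup F) (_ : M.Normal), Finite ((F ⧸ M) →* GWAux.Hc p) := by
    intro M hMn
    refine Finite.of_injective
      (fun φ : (F ⧸ M) →* GWAux.Hc p => fun i : Fin 4 => φ (QuotientGroup.mk (FreeGroup.of i)))
      ?_
    intro φ₁ φ₂ h
    have hcomp : φ₁.comp (QuotientGroup.mk' M) = φ₂.comp (QuotientGroup.mk' M) :=
      FreeGroup.ext_hom _ _ (fun i => congrFun h i)
    exact (MonoidHom.cancel_right (QuotientGroup.mk'_surjective M)).mp hcomp
  haveI finA : Finite ((F ⧸ M₂) →* GWAux.Hc p) := hfin M₂ inferInstance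
  haveI finB : Finite ((F ⧸ M₁) →* GWAux.Hc p) := hfin M₁ inferInstance
  -- the precomposition injection
  let θ : ((F ⧸ M₂) →* GWAux.Hc p) → ((F ⧸ M₁) →* GWAux.Hc p) := fun φ => φ.comp π
  have hθinj : Function.Injective θ := by
    intro φ₁ φ₂ h
    exact (MonoidHom.cancel_right hπs).mp h
  -- equivalence of hom sets induced by Φ
  let E : ((F ⧸ M₂) →* GWAux.Hc p) ≃ ((F ⧸ M₁) →* GWAux.Hc p) :=
    { toFun := fun φ => φ.comp Φ.symm.toMonoidHom
      invFun := fun χ => χ.comp Φ.toMonoidHom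
      left_inv := by
        intro φ
        ext x
        simp only [MonoidHom.comp_apply, MulEquiv.coe_toMonoidHom, MulEquiv.symm_apply_apply]
      right_inv := by
        intro χ
        ext x
        simp only [MonoidHom.comp_apply, MulEquiv.coe_toMonoidHom, MulEquiv.apply_symm_apply] }
  have hθsur : Function.Surjective θ :=
    (Finite.injective_iff_surjective_of_equiv E).mp hθinj
  obtain ⟨φ, hφ⟩ := hθsur h₀
  -- contradiction by evaluating at rWelded
  have hval : h₀ (QuotientGroup.mk rWelded) = f rWelded := rfl
  have hone : (QuotientGroup.mk rWelded : F ⧸ M₂) = 1 :=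
    (QuotientGroup.eq_one_iff _).mpr hrM2
  have : f rWelded = 1 := by
    rw [← hval, ← hφ]
    show φ (π (QuotientGroup.mk rWelded)) = 1
    rw [hπmk, hone, map_one]
  exact hfr_ne this
end
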